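/- arXiv:1103.4398 — 10 statements merged into one kernel-verified Lean document; each statement's English description precedes it below -/
import Mathlib

section
/- In the universal enveloping algebra of the 5-dimensional real nilpotent Lie algebra g with basis {X,U,V,E,Z} and nonzero brackets [U,V]=E, [X,U]=V, [X,V]=Z, the element W = 2UZ - V² - 2EX is central, i.e. [g, W] = 0. -/
open UniversalEnvelopingAlgebra

attribute [local instance] LieRing.ofAssociativeRing

lemma iota_comm {L : Type} [LieRing L] [LieAlgebra ℝ L] (a b c : L) (h : ⁅a, b⁆ = c)
    (w : UniversalEnvelopingAlgebra ℝ L) :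
    ι ℝ a * (ι ℝ b * w) = ι ℝ b * (ι ℝ a * w) + ι ℝ c * w := by
  have h2 := (ι ℝ (L := L)).map_lie a b
  rw [h, Ring.lie_def] at h2
  rw [h2]; noncomm_ring

lemma iota_comm' {L : Type} [LieRing L] [LieAlgebra ℝ L] (a b c : L) (h : ⁅a, b⁆ = c) :
    ι ℝ a * ι ℝ b = ι ℝ b * ι ℝ a + ι ℝ c := by
  have h2 := (ι ℝ (L := L)).map_lie a b
  rw [h, Ring.lie_def] at h2
  rw [h2]; noncomm_ring

/-- In the universal enveloping algebra of the 5-dimensional real nilpotent Lie algebra `g`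
with basis `{X,U,V,E,Z}` and nonzero brackets `[U,V]=E`, `[X,U]=V`, `[X,V]=Z`, the element
`W = 2UZ - V² - 2EX` is central, i.e. `[g, W] = 0`. -/
theorem stmt_0 (L : Type) [LieRing L] [LieAlgebra ℝ L]
    (X U V E Z : L) (b : Module.Basis (Fin 5) ℝ L) (hb : ⇑b = ![X, U, V, E, Z])
    (hUV : ⁅U, V⁆ = E) (hXU : ⁅X, U⁆ = V) (hXV : ⁅X, V⁆ = Z)
    (hXE : ⁅X, E⁆ = 0) (hXZ : ⁅X, Z⁆ = 0) (hUE : ⁅U, E⁆ = 0) (hUZ : ⁅U, Z⁆ = 0)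
    (hVE : ⁅V, E⁆ = 0) (hVZ : ⁅V, Z⁆ = 0) (hEZ : ⁅E, Z⁆ = 0)
    (W : UniversalEnvelopingAlgebra ℝ L)
    (hW : W = 2 * (ι ℝ U * ι ℝ Z) - (ι ℝ V) ^ 2 - 2 * (ι ℝ E * ι ℝ X)) :
    ∀ Y : L, ι ℝ Y * W - W * ι ℝ Y = 0 := by
  have hι0 : ι ℝ (0 : L) = (0 : UniversalEnvelopingAlgebra ℝ L) := by simp
  subst hW
  have hX : ι ℝ X * (2 * (ι ℝ U * ι ℝ Z) - (ι ℝ V) ^ 2 - 2 * (ι ℝ E * ι ℝ X)) -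
      (2 * (ι ℝ U * ι ℝ Z) - (ι ℝ V) ^ 2 - 2 * (ι ℝ E * ι ℝ X)) * ι ℝ X = 0 := by
    simp only [two_mul, pow_two, mul_sub, sub_mul, mul_add, add_mul, mul_assoc,
      iota_comm' X U V hXU, iota_comm X U V hXU,
      iota_comm' X V Z hXV, iota_comm X V Z hXV,
      iota_comm' X E 0 hXE, iota_comm X E 0 hXE,
      iota_comm' X Z 0 hXZ, iota_comm X Z 0 hXZ,
      iota_comm' U V E hUV, iota_comm U V E hUV,
      iota_comm' U E 0 hUE, iota_comm U E 0 hUE,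
      iota_comm' U Z 0 hUZ, iota_comm U Z 0 hUZ,
      iota_comm' V E 0 hVE, iota_comm V E 0 hVE,
      iota_comm' V Z 0 hVZ, iota_comm V Z 0 hVZ,
      iota_comm' E Z 0 hEZ, iota_comm E Z 0 hEZ,
      hι0, zero_mul, mul_zero, add_zero, zero_add]
    noncomm_ring
  have hU : ι ℝ U * (2 * (ι ℝ U * ι ℝ Z) - (ι ℝ V) ^ 2 - 2 * (ι ℝ E * ι ℝ X)) -
      (2 * (ι ℝ U * ι ℝ Z) - (ι ℝ V) ^ 2 - 2 * (ι ℝ E * ι ℝ X)) * ι ℝ U = 0 := by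
    simp only [two_mul, pow_two, mul_sub, sub_mul, mul_add, add_mul, mul_assoc,
      iota_comm' X U V hXU, iota_comm X U V hXU,
      iota_comm' X V Z hXV, iota_comm X V Z hXV,
      iota_comm' X E 0 hXE, iota_comm X E 0 hXE,
      iota_comm' X Z 0 hXZ, iota_comm X Z 0 hXZ,
      iota_comm' U V E hUV, iota_comm U V E hUV,
      iota_comm' U E 0 hUE, iota_comm U E 0 hUE,
      iota_comm' U Z 0 hUZ, iota_comm U Z 0 hUZ,
      iota_comm' V E 0 hVE, iota_comm V E 0 hVE,
      iota_comm' V Z 0 hVZ, iota_comm V Z 0 hVZ,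
      iota_comm' E Z 0 hEZ, iota_comm E Z 0 hEZ,
      hι0, zero_mul, mul_zero, add_zero, zero_add]
    noncomm_ring
  have hV : ι ℝ V * (2 * (ι ℝ U * ι ℝ Z) - (ι ℝ V) ^ 2 - 2 * (ι ℝ E * ι ℝ X)) -
      (2 * (ι ℝ U * ι ℝ Z) - (ι ℝ V) ^ 2 - 2 * (ι ℝ E * ι ℝ X)) * ι ℝ V = 0 := by
    simp only [two_mul, pow_two, mul_sub, sub_mul, mul_add, add_mul, mul_assoc,
      iota_comm' X U V hXU, iota_comm X U V hXU,
      iota_comm' X V Z hXV, iota_comm X V Z hXV,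
      iota_comm' X E 0 hXE, iota_comm X E 0 hXE,
      iota_comm' X Z 0 hXZ, iota_comm X Z 0 hXZ,
      iota_comm' U V E hUV, iota_comm U V E hUV,
      iota_comm' U E 0 hUE, iota_comm U E 0 hUE,
      iota_comm' U Z 0 hUZ, iota_comm U Z 0 hUZ,
      iota_comm' V E 0 hVE, iota_comm V E 0 hVE,
      iota_comm' V Z 0 hVZ, iota_comm V Z 0 hVZ,
      iota_comm' E Z 0 hEZ, iota_comm E Z 0 hEZ,
      hι0, zero_mul, mul_zero, add_zero, zero_add]
    noncomm_ring
  have hE : ι ℝ E * (2 * (ι ℝ U * ι ℝ Z) - (ι ℝ V) ^ 2 - 2 * (ι ℝ E * ι ℝ X)) -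
      (2 * (ι ℝ U * ι ℝ Z) - (ι ℝ V) ^ 2 - 2 * (ι ℝ E * ι ℝ X)) * ι ℝ E = 0 := by
    simp only [two_mul, pow_two, mul_sub, sub_mul, mul_add, add_mul, mul_assoc,
      iota_comm' X U V hXU, iota_comm X U V hXU,
      iota_comm' X V Z hXV, iota_comm X V Z hXV,
      iota_comm' X E 0 hXE, iota_comm X E 0 hXE,
      iota_comm' X Z 0 hXZ, iota_comm X Z 0 hXZ,
      iota_comm' U V E hUV, iota_comm U V E hUV,
      iota_comm' U E 0 hUE, iota_comm U E 0 hUE,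
      iota_comm' U Z 0 hUZ, iota_comm U Z 0 hUZ,
      iota_comm' V E 0 hVE, iota_comm V E 0 hVE,
      iota_comm' V Z 0 hVZ, iota_comm V Z 0 hVZ,
      iota_comm' E Z 0 hEZ, iota_comm E Z 0 hEZ,
      hι0, zero_mul, mul_zero, add_zero, zero_add]
    noncomm_ring
  have hZ : ι ℝ Z * (2 * (ι ℝ U * ι ℝ Z) - (ι ℝ V) ^ 2 - 2 * (ι ℝ E * ι ℝ X)) -
      (2 * (ι ℝ U * ι ℝ Z) - (ι ℝ V) ^ 2 - 2 * (ι ℝ E * ι ℝ X)) * ι ℝ Z = 0 := by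
    simp only [two_mul, pow_two, mul_sub, sub_mul, mul_add, add_mul, mul_assoc,
      iota_comm' X U V hXU, iota_comm X U V hXU,
      iota_comm' X V Z hXV, iota_comm X V Z hXV,
      iota_comm' X E 0 hXE, iota_comm X E 0 hXE,
      iota_comm' X Z 0 hXZ, iota_comm X Z 0 hXZ,
      iota_comm' U V E hUV, iota_comm U V E hUV,
      iota_comm' U E 0 hUE, iota_comm U E 0 hUE,
      iota_comm' U Z 0 hUZ, iota_comm U Z 0 hUZ,
      iota_comm' V E 0 hVE, iota_comm V E 0 hVE,
      iota_comm' V Z 0 hVZ, iota_comm V Z 0 hVZ,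
      iota_comm' E Z 0 hEZ, iota_comm E Z 0 hEZ,
      hι0, zero_mul, mul_zero, add_zero, zero_add]
    noncomm_ring
  set Wv : UniversalEnvelopingAlgebra ℝ L :=
    2 * (ι ℝ U * ι ℝ Z) - (ι ℝ V) ^ 2 - 2 * (ι ℝ E * ι ℝ X) with hWv
  set f : L →ₗ[ℝ] UniversalEnvelopingAlgebra ℝ L :=
    (LinearMap.mulRight ℝ Wv - LinearMap.mulLeft ℝ Wv) ∘ₗ (ι ℝ (L := L)).toLinearMap with hf
  have hfi : ∀ i : Fin 5, f (b i) = 0 := by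
    intro i
    fin_cases i <;>
      simp only [hb, hf, LinearMap.comp_apply, LinearMap.sub_apply,
        LinearMap.mulRight_apply, LinearMap.mulLeft_apply, LieHom.coe_toLinearMap,
        Matrix.cons_val_zero, Matrix.cons_val_one, Matrix.head_cons,
        Matrix.cons_val_two, Matrix.tail_cons, Matrix.cons_val_three,
        Matrix.cons_val_four, Matrix.cons_val_fin_one] <;>
      [exact hX; exact hU; exact hV; exact hE; exact hZ]
  have hf0 : f = 0 := b.ext (fun i => by rw [hfi i]; rfl)
  intro Y
  have h := LinearMap.ext_iff.mp hf0 Y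
  simpa [hf, LinearMap.comp_apply] using h
end

section
/- In the Lie algebra g with basis {X,U,V,E,Z} and brackets [U,V]=E, [X,U]=V, [X,V]=Z, for any linear functional l on g, the coadjoint stabilizer g(l) = {Y ∈ g : l([Y, W]) = 0 for all W ∈ g} of an l with l(E)=1 and l(X)=0 equals span{E, Z} ⊕ ℝ·(X - l(Z)U + l(V)V). -/
/-- Coadjoint stabilizer: for the Lie algebra `g` with basis `{X,U,V,E,Z}`, brackets
`[U,V]=E`, `[X,U]=V`, `[X,V]=Z`, and `l ∈ g*` with `l(E)=1`, `l(X)=0`, the stabilizer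
`g(l) = {Y : ∀ W, l([Y,W])=0}` equals `span{E, Z, X - l(Z)U + l(V)V}`. -/
theorem stmt_4 (L : Type) [LieRing L] [LieAlgebra ℝ L]
    (X U V E Z : L) (b : Module.Basis (Fin 5) ℝ L) (hb : ⇑b = ![X, U, V, E, Z])
    (hUV : ⁅U, V⁆ = E) (hXU : ⁅X, U⁆ = V) (hXV : ⁅X, V⁆ = Z)
    (hXE : ⁅X, E⁆ = 0) (hXZ : ⁅X, Z⁆ = 0) (hUE : ⁅U, E⁆ = 0) (hUZ : ⁅U, Z⁆ = 0)
    (hVE : ⁅V, E⁆ = 0) (hVZ : ⁅V, Z⁆ = 0) (hEZ : ⁅E, Z⁆ = 0)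
    (l : L →ₗ[ℝ] ℝ) (hlE : l E = 1) (hlX : l X = 0) :
    ∀ Y : L, (∀ W : L, l ⁅Y, W⁆ = 0) ↔
      Y ∈ Submodule.span ℝ ({E, Z, X - l Z • U + l V • V} : Set L) := by
  have hVU : ⁅V, U⁆ = -E := by rw [← hUV, lie_skew]
  have hUX : ⁅U, X⁆ = -V := by rw [← hXU, lie_skew]
  have hVX : ⁅V, X⁆ = -Z := by rw [← hXV, lie_skew]
  have hEX : ⁅E, X⁆ = 0 := by rw [← lie_skew, hXE, neg_zero]
  have hZX : ⁅Z, X⁆ = 0 := by rw [← lie_skew, hXZ, neg_zero]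
  have hEU : ⁅E, U⁆ = 0 := by rw [← lie_skew, hUE, neg_zero]
  have hZU : ⁅Z, U⁆ = 0 := by rw [← lie_skew, hUZ, neg_zero]
  have hEV : ⁅E, V⁆ = 0 := by rw [← lie_skew, hVE, neg_zero]
  have hZV : ⁅Z, V⁆ = 0 := by rw [← lie_skew, hVZ, neg_zero]
  have hZE : ⁅Z, E⁆ = 0 := by rw [← lie_skew, hEZ, neg_zero]
  -- reduce "for all W" to the five basis vectors
  have key : ∀ Y : L,
      (l ⁅Y, X⁆ = 0 ∧ l ⁅Y, U⁆ = 0 ∧ l ⁅Y, V⁆ = 0 ∧ l ⁅Y, E⁆ = 0 ∧ l ⁅Y, Z⁆ = 0) →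
      ∀ W : L, l ⁅Y, W⁆ = 0 := by
    intro Y h W
    obtain ⟨h0, h1, h2, h3, h4⟩ := h
    have : l.comp (LieAlgebra.ad ℝ L Y) = 0 := by
      apply b.ext
      intro i
      fin_cases i <;>
        simp [hb, LieAlgebra.ad_apply, h0, h1, h2, h3, h4]
    have := LinearMap.congr_fun this W
    simpa [LieAlgebra.ad_apply] using this
  intro Y
  constructor
  · intro h
    set c := b.repr Y with hc
    have hY : Y = c 0 • X + c 1 • U + c 2 • V + c 3 • E + c 4 • Z := by
      have := b.sum_repr Y
      rw [Fin.sum_univ_five] at this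
      simp only [hb] at this
      simp only [Matrix.cons_val_zero, Matrix.cons_val_one, Matrix.head_cons] at this
      rw [← this]
      norm_num [← hc]
      rfl
    have hU' : l ⁅Y, U⁆ = 0 := h U
    have hV' : l ⁅Y, V⁆ = 0 := h V
    rw [hY] at hU' hV'
    simp only [add_lie, smul_lie, lie_self, hXU, hUV, hVU, hEU, hZU, hXV, hVX, hEV, hZV,
      smul_zero, smul_neg, add_zero, zero_add, map_add, map_neg, map_smul, map_zero,
      smul_eq_mul, hlE, mul_one] at hU' hV'
    -- hU' : c 0 * l V - c 2 = 0 (roughly); hV' : c 0 * l Z + c 1 = 0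
    have h2 : c 2 = c 0 * l V := by linarith
    have h1 : c 1 = -(c 0 * l Z) := by linarith
    have : Y = c 3 • E + c 4 • Z + c 0 • (X - l Z • U + l V • V) := by
      rw [hY, h1, h2]
      module
    rw [this]
    have hE : E ∈ Submodule.span ℝ ({E, Z, X - l Z • U + l V • V} : Set L) :=
      Submodule.subset_span (by simp)
    have hZm : Z ∈ Submodule.span ℝ ({E, Z, X - l Z • U + l V • V} : Set L) :=
      Submodule.subset_span (by simp)
    have hG : X - l Z • U + l V • V ∈ Submodule.span ℝ ({E, Z, X - l Z • U + l V • V} : Set L) :=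
      Submodule.subset_span (by simp)
    exact Submodule.add_mem _ (Submodule.add_mem _ (Submodule.smul_mem _ _ hE)
      (Submodule.smul_mem _ _ hZm)) (Submodule.smul_mem _ _ hG)
  · intro hmem
    refine Submodule.span_induction ?_ ?_ ?_ ?_ hmem
    · rintro x hx
      rcases hx with rfl | rfl | rfl
      · exact key _ ⟨by simp [hEX], by simp [hEU], by simp [hEV], by simp, by simp [hEZ]⟩
      · exact key _ ⟨by simp [hZX], by simp [hZU], by simp [hZV], by simp [hZE], by simp⟩
      · apply key
        refine ⟨?_, ?_, ?_, ?_, ?_⟩ <;>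
          simp [add_lie, sub_lie, smul_lie, hXU, hXV, hXE, hXZ, hUX, hUV, hUE, hUZ,
            hVX, hVU, hVE, hVZ, hlE, hlX] <;> ring
    · intro W; simp
    · intro x y _ _ hx hy W; simp [add_lie, hx W, hy W]
    · intro a x _ hx W; simp [smul_lie, hx W]
end

section
/- In the Lie algebra g with basis {X,U,V,E,Z} and brackets [U,V]=E, [X,U]=V, [X,V]=Z, for any l ∈ g* with l(E)=1, l(X)=0 and l(Z) ≠ 0, the subspace b = span{E, Z, V, X - l(Z)U + l(V)V} is a polarization at l: it is a Lie subalgebra of g, it contains the stabilizer g(l), it has dimension (dim g + dim g(l))/2 = 4, and l([b, b]) = 0. -/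
/-- For the 5-dimensional nilpotent Lie algebra `g` with basis `{X,U,V,E,Z}` and
brackets `[U,V]=E`, `[X,U]=V`, `[X,V]=Z`, and `l ∈ g*` with `l(E)=1`, `l(X)=0`,
`l(Z) ≠ 0`, the subspace `b = span{E, Z, V, X - l(Z)U + l(V)V}` is a polarization at
`l`: a Lie subalgebra containing the stabilizer `g(l)`, of dimension
`(dim g + dim g(l))/2 = 4`, with `l([b,b]) = 0`. -/
theorem stmt_5 (L : Type) [LieRing L] [LieAlgebra ℝ L]
    (X U V E Z : L) (b : Module.Basis (Fin 5) ℝ L) (hb : ⇑b = ![X, U, V, E, Z])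
    (hUV : ⁅U, V⁆ = E) (hXU : ⁅X, U⁆ = V) (hXV : ⁅X, V⁆ = Z)
    (hXE : ⁅X, E⁆ = 0) (hXZ : ⁅X, Z⁆ = 0) (hUE : ⁅U, E⁆ = 0) (hUZ : ⁅U, Z⁆ = 0)
    (hVE : ⁅V, E⁆ = 0) (hVZ : ⁅V, Z⁆ = 0) (hEZ : ⁅E, Z⁆ = 0)
    (l : L →ₗ[ℝ] ℝ) (hlE : l E = 1) (hlX : l X = 0) (hlZ : l Z ≠ 0)
    (bV : Submodule ℝ L)
    (hbV : bV = Submodule.span ℝ ({E, Z, V, X - l Z • U + l V • V} : Set L)) :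
    (∀ x ∈ bV, ∀ y ∈ bV, ⁅x, y⁆ ∈ bV) ∧
    (∀ Y : L, (∀ W : L, l ⁅Y, W⁆ = 0) → Y ∈ bV) ∧
    Module.finrank ℝ ↥bV = 4 ∧
    (∀ x ∈ bV, ∀ y ∈ bV, l ⁅x, y⁆ = 0) := by
  subst hbV
  set W : L := X - l Z • U + l V • V with hW
  set bV : Submodule ℝ L := Submodule.span ℝ ({E, Z, V, W} : Set L) with hbV
  have hb0 : b 0 = X := by rw [hb]; rfl
  have hb1 : b 1 = U := by rw [hb]; rfl
  have hb2 : b 2 = V := by rw [hb]; rfl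
  have hb3 : b 3 = E := by rw [hb]; rfl
  have hb4 : b 4 = Z := by rw [hb]; rfl
  have hEb : E ∈ bV := Submodule.subset_span (by simp)
  have hZb : Z ∈ bV := Submodule.subset_span (by simp)
  have hVb : V ∈ bV := Submodule.subset_span (by simp)
  have hWb : W ∈ bV := Submodule.subset_span (by simp)
  have hVU : ⁅V, U⁆ = -E := by rw [← lie_skew, hUV]
  have hEX : ⁅E, X⁆ = 0 := by rw [← lie_skew, hXE, neg_zero]
  have hZX : ⁅Z, X⁆ = 0 := by rw [← lie_skew, hXZ, neg_zero]
  have hEU : ⁅E, U⁆ = 0 := by rw [← lie_skew, hUE, neg_zero]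
  have hZU : ⁅Z, U⁆ = 0 := by rw [← lie_skew, hUZ, neg_zero]
  have hEV : ⁅E, V⁆ = 0 := by rw [← lie_skew, hVE, neg_zero]
  have hZV : ⁅Z, V⁆ = 0 := by rw [← lie_skew, hVZ, neg_zero]
  have hZE : ⁅Z, E⁆ = 0 := by rw [← lie_skew, hEZ, neg_zero]
  have hWV : ⁅W, V⁆ = Z - l Z • E := by
    simp [hW, lie_smul, smul_lie, add_lie, sub_lie, hXV, hUV]
  have hVW : ⁅V, W⁆ = -(Z - l Z • E) := by rw [← lie_skew, hWV]
  have hWE : ⁅W, E⁆ = 0 := by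
    simp [hW, add_lie, sub_lie, smul_lie, hXE, hUE, hVE]
  have hEW : ⁅E, W⁆ = 0 := by rw [← lie_skew, hWE, neg_zero]
  have hWZ : ⁅W, Z⁆ = 0 := by
    simp [hW, add_lie, sub_lie, smul_lie, hXZ, hUZ, hVZ]
  have hZW : ⁅Z, W⁆ = 0 := by rw [← lie_skew, hWZ, neg_zero]
  have key : ∀ x ∈ ({E, Z, V, W} : Set L), ∀ y ∈ ({E, Z, V, W} : Set L),
      ⁅x, y⁆ ∈ bV ∧ l ⁅x, y⁆ = 0 := by
    intro x hx y hy
    simp only [Set.mem_insert_iff, Set.mem_singleton_iff] at hx hy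
    rcases hx with rfl | rfl | rfl | rfl <;> rcases hy with rfl | rfl | rfl | rfl <;>
      simp_all only [lie_self, hEZ, hZE, hEV, hVE, hEW, hWE, hZV, hVZ, hZW, hWZ, hVW, hWV] <;>
      constructor <;>
      first
        | exact Submodule.zero_mem _
        | exact Submodule.sub_mem _ hZb (Submodule.smul_mem _ _ hEb)
        | exact Submodule.neg_mem _ (Submodule.sub_mem _ hZb (Submodule.smul_mem _ _ hEb))
        | simp [map_sub, map_neg, map_smul, hlE]
  have main : ∀ x ∈ bV, ∀ y ∈ bV, ⁅x, y⁆ ∈ bV ∧ l ⁅x, y⁆ = 0 := by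
    intro x hx y hy
    induction hx, hy using Submodule.span_induction₂ with
    | mem_mem x y hx hy => exact key x hx y hy
    | zero_left y hy => simp
    | zero_right x hx => simp
    | add_left x y z hx hy hz h1 h2 =>
        exact ⟨by rw [add_lie]; exact Submodule.add_mem _ h1.1 h2.1,
          by rw [add_lie, map_add, h1.2, h2.2, add_zero]⟩
    | add_right x y z hx hy hz h1 h2 =>
        exact ⟨by rw [lie_add]; exact Submodule.add_mem _ h1.1 h2.1,
          by rw [lie_add, map_add, h1.2, h2.2, add_zero]⟩
    | smul_left r x y hx hy h =>
        exact ⟨by rw [smul_lie]; exact Submodule.smul_mem _ _ h.1,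
          by rw [smul_lie, map_smul, h.2, smul_zero]⟩
    | smul_right r x y hx hy h =>
        exact ⟨by rw [lie_smul]; exact Submodule.smul_mem _ _ h.1,
          by rw [lie_smul, map_smul, h.2, smul_zero]⟩
  refine ⟨fun x hx y hy => (main x hx y hy).1, ?_, ?_, fun x hx y hy => (main x hx y hy).2⟩
  · -- stabilizer containment
    intro Y hY
    have hrepr : Y = b.repr Y 0 • X + b.repr Y 1 • U + b.repr Y 2 • V
        + b.repr Y 3 • E + b.repr Y 4 • Z := by
      have := b.sum_repr Y
      rw [Fin.sum_univ_five, hb0, hb1, hb2, hb3, hb4] at this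
      exact this.symm
    have h1 := hY U
    have h2 := hY V
    rw [hrepr] at h1 h2
    simp only [add_lie, smul_lie, lie_self, smul_zero, hXU, hVU, hEU, hZU,
      hXV, hUV, hEV, hZV, add_zero, zero_add, map_add, map_smul, map_neg,
      smul_eq_mul, smul_neg, map_zero, hlE, mul_one] at h1 h2
    -- h1 : repr0 * l V - repr2 = 0 (some shape), h2 : repr0 * l Z + repr1 = 0
    have hc : b.repr Y 2 = b.repr Y 0 * l V := by linarith
    have hbb : b.repr Y 1 = -(b.repr Y 0 * l Z) := by linarith
    have hYeq : Y = b.repr Y 0 • W + b.repr Y 3 • E + b.repr Y 4 • Z := by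
      conv_lhs => rw [hrepr]
      rw [hc, hbb, hW]
      module
    rw [hYeq]
    exact Submodule.add_mem _ (Submodule.add_mem _ (Submodule.smul_mem _ _ hWb)
      (Submodule.smul_mem _ _ hEb)) (Submodule.smul_mem _ _ hZb)
  · -- finrank
    have hli : LinearIndependent ℝ ![E, Z, V, W] := by
      rw [Fintype.linearIndependent_iff]
      intro g hg
      rw [Fin.sum_univ_four] at hg
      simp only [Matrix.cons_val_zero, Matrix.cons_val_one, Matrix.head_cons,
        Matrix.cons_val_two, Matrix.tail_cons, Matrix.cons_val_three] at hg
      have hg' : ∑ i, (![g 3, -(g 3 * l Z), g 2 + g 3 * l V, g 0, g 1] : Fin 5 → ℝ) i • b i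
          = 0 := by
        rw [Fin.sum_univ_five]
        simp only [Matrix.cons_val_zero, Matrix.cons_val_one, Matrix.head_cons,
          Matrix.cons_val_two, Matrix.tail_cons, Matrix.cons_val_three, Matrix.cons_val_four]
        rw [hb0, hb1, hb2, hb3, hb4, ← hg, hW]
        module
      have hz := Fintype.linearIndependent_iff.mp b.linearIndependent _ hg'
      have h0 := hz 0
      have h1 := hz 2
      have h3 := hz 3
      have h4 := hz 4
      simp only [Matrix.cons_val_zero, Matrix.cons_val_one, Matrix.head_cons,
        Matrix.cons_val_two, Matrix.tail_cons, Matrix.cons_val_three,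
        Matrix.cons_val_four] at h0 h1 h3 h4
      have h2' : g 2 = 0 := by
        rw [h0] at h1; linarith
      intro i
      have hi : i.val = 0 ∨ i.val = 1 ∨ i.val = 2 ∨ i.val = 3 := by omega
      rcases hi with h | h | h | h
      · exact (Fin.ext h : i = 0) ▸ h3
      · exact (Fin.ext h : i = 1) ▸ h4
      · exact (Fin.ext h : i = 2) ▸ h2'
      · exact (Fin.ext h : i = 3) ▸ h0
    have hset : Submodule.span ℝ ({E, Z, V, W} : Set L)
        = Submodule.span ℝ (Set.range ![E, Z, V, W]) := by
      congr 1
      ext x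
      simp [Matrix.range_cons, Matrix.range_empty]
      tauto
    rw [hbV, hset, finrank_span_eq_card hli]
    rfl
end

section
/- In the Lie algebra g with basis {X,U,V,E,Z} and brackets [U,V]=E, [X,U]=V, [X,V]=Z, for l ∈ g* with l(E)=1, l(X)=0, l(Z) ≠ 0, the only vector Y in span{U,V} (up to scalar) with Y ∉ g(l) and [Y, g(l)] ⊆ g(l) is Y = V; consequently span{E,Z,V, X - l(Z)U + l(V)V} is the unique polarization at l containing g(l) and contained in g(l) + span{U,V}. -/
/-- For the Lie algebra `g = span{X,U,V,E,Z}` with brackets `[U,V]=E`, `[X,U]=V`,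
`[X,V]=Z` and `l ∈ g*` with `l(E)=1`, `l(X)=0`, `l(Z)≠0` (so that the stabilizer is
`g(l) = span{E,Z, X - l(Z)U + l(V)V}`): the only vector `Y ∈ span{U,V}` (up to nonzero
scalar) with `Y ∉ g(l)` and `[Y, g(l)] ⊆ g(l)` is `Y = V`; consequently
`span{E,Z,V, X - l(Z)U + l(V)V}` is the unique polarization at `l` containing `g(l)`
and contained in `g(l) + span{U,V}`. -/
theorem stmt_6 (L : Type) [LieRing L] [LieAlgebra ℝ L]
    (X U V E Z : L) (b : Module.Basis (Fin 5) ℝ L) (hb : ⇑b = ![X, U, V, E, Z])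
    (hUV : ⁅U, V⁆ = E) (hXU : ⁅X, U⁆ = V) (hXV : ⁅X, V⁆ = Z)
    (hXE : ⁅X, E⁆ = 0) (hXZ : ⁅X, Z⁆ = 0) (hUE : ⁅U, E⁆ = 0) (hUZ : ⁅U, Z⁆ = 0)
    (hVE : ⁅V, E⁆ = 0) (hVZ : ⁅V, Z⁆ = 0) (hEZ : ⁅E, Z⁆ = 0)
    (l : L →ₗ[ℝ] ℝ) (hlE : l E = 1) (hlX : l X = 0) (hlZ : l Z ≠ 0)
    (stab : Submodule ℝ L)
    (hstab : stab = Submodule.span ℝ ({E, Z, X - l Z • U + l V • V} : Set L)) :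
    (∀ a c : ℝ,
      ((a • U + c • V ∉ stab) ∧ ∀ W ∈ stab, ⁅a • U + c • V, W⁆ ∈ stab) ↔
        (a = 0 ∧ c ≠ 0)) ∧
    (∀ p : Submodule ℝ L,
      (∀ x ∈ p, ∀ y ∈ p, ⁅x, y⁆ ∈ p) →
      stab ≤ p →
      p ≤ stab ⊔ Submodule.span ℝ ({U, V} : Set L) →
      Module.finrank ℝ ↥p = 4 →
      (∀ x ∈ p, ∀ y ∈ p, l ⁅x, y⁆ = 0) →
      p = Submodule.span ℝ ({E, Z, V, X - l Z • U + l V • V} : Set L)) := by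
  set T := X - l Z • U + l V • V with hTdef
  -- reversed brackets
  have hVU : ⁅V, U⁆ = -E := by rw [← lie_skew, hUV]
  have hUX : ⁅U, X⁆ = -V := by rw [← lie_skew, hXU]
  have hVX : ⁅V, X⁆ = -Z := by rw [← lie_skew, hXV]
  -- linear independence of the basis vectors
  have key : ∀ α β γ δ ε : ℝ, α • X + β • U + γ • V + δ • E + ε • Z = 0 →
      α = 0 ∧ β = 0 ∧ γ = 0 ∧ δ = 0 ∧ ε = 0 := by
    intro α β γ δ ε h
    have li := Fintype.linearIndependent_iff.mp b.linearIndependent ![α, β, γ, δ, ε]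
    have hs : ∑ i, ![α, β, γ, δ, ε] i • b i = 0 := by
      rw [Fin.sum_univ_five, hb]
      simpa using h
    have h0 := li hs 0
    have h1 := li hs 1
    have h2 := li hs 2
    have h3 := li hs 3
    have h4 := li hs 4
    simp at h0 h1 h2 h3 h4
    exact ⟨h0, h1, h2, h3, h4⟩
  -- representation of an arbitrary element
  have repr5 : ∀ x : L, x = b.repr x 0 • X + b.repr x 1 • U + b.repr x 2 • V +
      b.repr x 3 • E + b.repr x 4 • Z := by
    intro x
    have h := b.sum_repr x
    rw [Fin.sum_univ_five, hb] at h
    simpa using h.symm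
  -- generators of stab
  have hEs : E ∈ stab := by
    rw [hstab]; exact Submodule.subset_span (by simp)
  have hZs : Z ∈ stab := by
    rw [hstab]; exact Submodule.subset_span (by simp)
  have hTs : T ∈ stab := by
    rw [hstab]; exact Submodule.subset_span (by simp)
  -- membership characterization of stab
  have memstab : ∀ w ∈ stab, ∃ α β γ : ℝ, w = α • E + β • Z + γ • T := by
    intro w hw
    rw [hstab] at hw
    induction hw using Submodule.span_induction with
    | mem x hx =>
      simp only [Set.mem_insert_iff, Set.mem_singleton_iff] at hx
      rcases hx with rfl | rfl | rfl
      · exact ⟨1, 0, 0, by simp⟩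
      · exact ⟨0, 1, 0, by simp⟩
      · exact ⟨0, 0, 1, by simp⟩
    | zero => exact ⟨0, 0, 0, by simp⟩
    | add x y _ _ hx hy =>
      obtain ⟨α, β, γ, rfl⟩ := hx
      obtain ⟨α', β', γ', rfl⟩ := hy
      exact ⟨α + α', β + β', γ + γ', by module⟩
    | smul r x _ hx =>
      obtain ⟨α, β, γ, rfl⟩ := hx
      exact ⟨r * α, r * β, r * γ, by module⟩
  -- membership in stab forces coefficients
  have stabcoef : ∀ a c : ℝ, a • U + c • V ∈ stab → a = 0 ∧ c = 0 := by
    intro a c h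
    obtain ⟨α, β, γ, hw⟩ := memstab _ h
    have h0 : (-γ) • X + (a + γ * l Z) • U + (c - γ * l V) • V + (-α) • E + (-β) • Z = 0 := by
      rw [hTdef] at hw
      linear_combination (norm := module) hw
    obtain ⟨hγ, hA, hC, -, -⟩ := key _ _ _ _ _ h0
    have hγ' : γ = 0 := by linarith [neg_eq_zero.mp hγ]
    constructor
    · have := hA; rw [hγ'] at this; linarith
    · have := hC; rw [hγ'] at this; linarith
  -- the crucial bracket
  have hbrT : ∀ a c : ℝ, ⁅a • U + c • V, T⁆ = (a * l V + c * l Z) • E - a • V - c • Z := by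
    intro a c
    rw [hTdef]
    simp only [lie_add, add_lie, lie_sub, sub_lie, lie_smul, smul_lie, hUV, hUX, hVX, hVU,
      lie_self]
    module
  have hbrE : ∀ a c : ℝ, ⁅a • U + c • V, E⁆ = 0 := by
    intro a c; simp [hUE, hVE]
  have hbrZ : ∀ a c : ℝ, ⁅a • U + c • V, Z⁆ = 0 := by
    intro a c; simp [hUZ, hVZ]
  constructor
  · -- Part 1
    intro a c
    constructor
    · rintro ⟨hnot, hbr⟩
      have hin := hbr T hTs
      rw [hbrT] at hin
      -- a must vanish
      have hv : (a * l V + c * l Z) • E - a • V - c • Z ∈ stab := hin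
      obtain ⟨α, β, γ, hw⟩ := memstab _ hv
      have h0 : (-γ) • X + (γ * l Z) • U + (-a - γ * l V) • V +
          (a * l V + c * l Z - α) • E + (-c - β) • Z = 0 := by
        rw [hTdef] at hw
        linear_combination (norm := module) hw
      obtain ⟨hγ, -, hA, -, -⟩ := key _ _ _ _ _ h0
      have hγ' : γ = 0 := by linarith [neg_eq_zero.mp hγ]
      have ha : a = 0 := by rw [hγ'] at hA; linarith
      refine ⟨ha, ?_⟩
      intro hc
      apply hnot
      rw [ha, hc]
      simpa using (Submodule.zero_mem stab)
    · rintro ⟨ha, hc⟩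
      subst ha
      constructor
      · intro h
        exact hc (stabcoef 0 c h).2
      · intro W hW
        have hWs := hW
        rw [hstab] at hW
        induction hW using Submodule.span_induction with
        | mem x hx =>
          simp only [Set.mem_insert_iff, Set.mem_singleton_iff] at hx
          rcases hx with rfl | rfl | rfl
          · rw [hbrE]; exact Submodule.zero_mem _
          · rw [hbrZ]; exact Submodule.zero_mem _
          · rw [hbrT]
            simp only [zero_mul, zero_add, zero_smul, sub_zero]
            exact Submodule.sub_mem _ (Submodule.smul_mem _ _ hEs)
              (Submodule.smul_mem _ _ hZs)
        | zero => simp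
        | add x y hx hy ihx ihy =>
          rw [lie_add]
          exact Submodule.add_mem _ (ihx (hstab ▸ hx)) (ihy (hstab ▸ hy))
        | smul r x hx ihx =>
          rw [lie_smul]
          exact Submodule.smul_mem _ _ (ihx (hstab ▸ hx))
  · -- Part 2
    intro p hclosed hsp _ hdim _
    -- if U and V both lie in p, then p = ⊤, contradicting finrank p = 4
    have hfinL : Module.finrank ℝ L = 5 := by
      rw [Module.finrank_eq_card_basis b, Fintype.card_fin]
    have hUVp : U ∈ p → V ∈ p → False := by
      intro hU hV
      have hX : X ∈ p := by
        have : X = T + l Z • U - l V • V := by rw [hTdef]; module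
        rw [this]
        exact Submodule.sub_mem _ (Submodule.add_mem _ (hsp hTs)
          (Submodule.smul_mem _ _ hU)) (Submodule.smul_mem _ _ hV)
      have htop : p = ⊤ := by
        rw [eq_top_iff]
        intro x _
        rw [repr5 x]
        exact Submodule.add_mem _ (Submodule.add_mem _ (Submodule.add_mem _
          (Submodule.add_mem _ (Submodule.smul_mem _ _ hX) (Submodule.smul_mem _ _ hU))
          (Submodule.smul_mem _ _ hV)) (Submodule.smul_mem _ _ (hsp hEs)))
          (Submodule.smul_mem _ _ (hsp hZs))
      rw [htop, finrank_top, hfinL] at hdim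
      norm_num at hdim
    -- V ∈ p
    have hVp : V ∈ p := by
      -- find an element of p outside stab
      have hne : stab ≠ p := by
        intro h
        have hle : Module.finrank ℝ stab ≤ 3 := by
          have hr : ({E, Z, T} : Set L) = Set.range ![E, Z, T] := by
            ext x
            simp [Matrix.range_cons, Matrix.range_empty]
            tauto
          rw [hstab, hr]
          simpa [Set.finrank] using finrank_range_le_card (R := ℝ) ![E, Z, T]
        rw [h, hdim] at hle
        norm_num at hle
      obtain ⟨y, hyp, hys⟩ := SetLike.exists_of_lt (lt_of_le_of_ne hsp hne)
      set a := b.repr y 1 + b.repr y 0 * l Z with hadef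
      set c := b.repr y 2 - b.repr y 0 * l V with hcdef
      have hyd : a • U + c • V =
          y - b.repr y 0 • T - b.repr y 3 • E - b.repr y 4 • Z := by
        rw [hadef, hcdef, hTdef]
        linear_combination (norm := module) - repr5 y
      have hmem : a • U + c • V ∈ p := by
        rw [hyd]
        exact Submodule.sub_mem _ (Submodule.sub_mem _ (Submodule.sub_mem _ hyp
          (Submodule.smul_mem _ _ (hsp hTs))) (Submodule.smul_mem _ _ (hsp hEs)))
          (Submodule.smul_mem _ _ (hsp hZs))
      have hnots : a • U + c • V ∉ stab := by
        intro h
        apply hys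
        have : y = (a • U + c • V) + b.repr y 0 • T + b.repr y 3 • E + b.repr y 4 • Z := by
          rw [hyd]; module
        rw [this]
        exact Submodule.add_mem _ (Submodule.add_mem _ (Submodule.add_mem _ h
          (Submodule.smul_mem _ _ hTs)) (Submodule.smul_mem _ _ hEs))
          (Submodule.smul_mem _ _ hZs)
      -- bracket with T lies in p; extract a • V ∈ p
      have hbrp : ⁅a • U + c • V, T⁆ ∈ p := hclosed _ hmem _ (hsp hTs)
      rw [hbrT] at hbrp
      have haV : a • V ∈ p := by
        have : a • V = (a * l V + c * l Z) • E - c • Z -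
            ((a * l V + c * l Z) • E - a • V - c • Z) := by module
        rw [this]
        exact Submodule.sub_mem _ (Submodule.sub_mem _
          (Submodule.smul_mem _ _ (hsp hEs)) (Submodule.smul_mem _ _ (hsp hZs))) hbrp
      by_cases ha : a = 0
      · -- then c ≠ 0 and c • V ∈ p
        have hc : c ≠ 0 := by
          intro hc
          apply hnots
          rw [ha, hc]
          simpa using (Submodule.zero_mem stab)
        have hcV : c • V ∈ p := by
          have : c • V = (a • U + c • V) - a • U := by module
          rw [this]
          refine Submodule.sub_mem _ hmem ?_
          rw [ha]
          simpa using Submodule.zero_mem p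
        have := Submodule.smul_mem p c⁻¹ hcV
        rwa [smul_smul, inv_mul_cancel₀ hc, one_smul] at this
      · exfalso
        have hV : V ∈ p := by
          have := Submodule.smul_mem p a⁻¹ haV
          rwa [smul_smul, inv_mul_cancel₀ ha, one_smul] at this
        have hU : U ∈ p := by
          have haU : a • U ∈ p := by
            have : a • U = (a • U + c • V) - c • V := by module
            rw [this]
            exact Submodule.sub_mem _ hmem (Submodule.smul_mem _ _ hV)
          have := Submodule.smul_mem p a⁻¹ haU
          rwa [smul_smul, inv_mul_cancel₀ ha, one_smul] at this
        exact hUVp hU hV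
    -- now prove the equality
    apply le_antisymm
    · -- p ≤ span {E, Z, V, T}
      intro x hx
      set a := b.repr x 1 + b.repr x 0 * l Z with hadef
      have hxd : a • U = x - b.repr x 0 • T -
          (b.repr x 2 - b.repr x 0 * l V) • V - b.repr x 3 • E - b.repr x 4 • Z := by
        rw [hadef, hTdef]
        linear_combination (norm := module) - repr5 x
      have haU : a • U ∈ p := by
        rw [hxd]
        exact Submodule.sub_mem _ (Submodule.sub_mem _ (Submodule.sub_mem _
          (Submodule.sub_mem _ hx (Submodule.smul_mem _ _ (hsp hTs)))
          (Submodule.smul_mem _ _ hVp)) (Submodule.smul_mem _ _ (hsp hEs)))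
          (Submodule.smul_mem _ _ (hsp hZs))
      have ha : a = 0 := by
        by_contra ha
        have hU : U ∈ p := by
          have := Submodule.smul_mem p a⁻¹ haU
          rwa [smul_smul, inv_mul_cancel₀ ha, one_smul] at this
        exact hUVp hU hVp
      have hEm : E ∈ Submodule.span ℝ ({E, Z, V, T} : Set L) :=
        Submodule.subset_span (by simp)
      have hZm : Z ∈ Submodule.span ℝ ({E, Z, V, T} : Set L) :=
        Submodule.subset_span (by simp)
      have hVm : V ∈ Submodule.span ℝ ({E, Z, V, T} : Set L) :=
        Submodule.subset_span (by simp)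
      have hTm : T ∈ Submodule.span ℝ ({E, Z, V, T} : Set L) :=
        Submodule.subset_span (by simp)
      have hxe : x = b.repr x 0 • T + (b.repr x 2 - b.repr x 0 * l V) • V +
          b.repr x 3 • E + b.repr x 4 • Z + a • U := by
        rw [hxd]; module
      rw [hxe, ha]
      simp only [zero_smul, add_zero]
      exact Submodule.add_mem _ (Submodule.add_mem _ (Submodule.add_mem _
        (Submodule.smul_mem _ _ hTm) (Submodule.smul_mem _ _ hVm))
        (Submodule.smul_mem _ _ hEm)) (Submodule.smul_mem _ _ hZm)
    · -- span {E, Z, V, T} ≤ p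
      rw [Submodule.span_le]
      intro w hw
      simp only [Set.mem_insert_iff, Set.mem_singleton_iff] at hw
      rcases hw with rfl | rfl | rfl | rfl
      · exact hsp hEs
      · exact hsp hZs
      · exact hVp
      · exact hsp hTs
end

section
/- In the Lie algebra g with basis {X,U,V,E,Z} and brackets [U,V]=E, [X,U]=V, [X,V]=Z, with h = span{X,E} and q = span{Z,U,V}, the polarization b = span{E,Z,V, X - l(Z)U} (for generic l with l(Z)≠0, l(V)=0) does not satisfy the transversality condition b = (b ∩ q) + (b ∩ h). -/
/-- For the Lie algebra `g` with basis `{X,U,V,E,Z}`, brackets `[U,V]=E`, `[X,U]=V`,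
`[X,V]=Z`, with `h = span{X,E}` and `q = span{Z,U,V}`, the polarization
`b = span{E,Z,V, X - l(Z)U}` (for `l` with `l(E)=1`, `l(X)=0`, `l(V)=0`, `l(Z)≠0`)
does not satisfy the transversality condition `b = (b ∩ q) + (b ∩ h)`. -/
theorem stmt_7 (L : Type) [LieRing L] [LieAlgebra ℝ L]
    (X U V E Z : L) (b : Module.Basis (Fin 5) ℝ L) (hb : ⇑b = ![X, U, V, E, Z])
    (hUV : ⁅U, V⁆ = E) (hXU : ⁅X, U⁆ = V) (hXV : ⁅X, V⁆ = Z)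
    (hXE : ⁅X, E⁆ = 0) (hXZ : ⁅X, Z⁆ = 0) (hUE : ⁅U, E⁆ = 0) (hUZ : ⁅U, Z⁆ = 0)
    (hVE : ⁅V, E⁆ = 0) (hVZ : ⁅V, Z⁆ = 0) (hEZ : ⁅E, Z⁆ = 0)
    (l : L →ₗ[ℝ] ℝ) (hlE : l E = 1) (hlX : l X = 0) (hlV : l V = 0) (hlZ : l Z ≠ 0)
    (hsub qsub bpol : Submodule ℝ L)
    (hh : hsub = Submodule.span ℝ ({X, E} : Set L))
    (hq : qsub = Submodule.span ℝ ({Z, U, V} : Set L))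
    (hbpol : bpol = Submodule.span ℝ ({E, Z, V, X - l Z • U} : Set L)) :
    bpol ≠ (bpol ⊓ qsub) ⊔ (bpol ⊓ hsub) := by
  set c := l Z with hc
  -- coordinate functionals
  set f := b.coord 0 with hf
  set g := b.coord 1 with hgdef
  have hbX : b 0 = X := by rw [hb]; rfl
  have hbU : b 1 = U := by rw [hb]; rfl
  have hbV : b 2 = V := by rw [hb]; rfl
  have hbE : b 3 = E := by rw [hb]; rfl
  have hbZ : b 4 = Z := by rw [hb]; rfl
  have coordval : ∀ i j : Fin 5, b.coord i (b j) = if j = i then 1 else 0 := by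
    intro i j
    simp [Module.Basis.coord_apply, Module.Basis.repr_self, Finsupp.single_apply]
  have fX : f X = 1 := by rw [← hbX, hf, coordval]; simp
  have fU : f U = 0 := by rw [← hbU, hf, coordval]; simp
  have fV : f V = 0 := by rw [← hbV, hf, coordval]; simp
  have fE : f E = 0 := by rw [← hbE, hf, coordval]; simp
  have fZ : f Z = 0 := by rw [← hbZ, hf, coordval]; simp
  have gX : g X = 0 := by rw [← hbX, hgdef, coordval]; simp
  have gU : g U = 1 := by rw [← hbU, hgdef, coordval]; simp
  have gV : g V = 0 := by rw [← hbV, hgdef, coordval]; simp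
  have gE : g E = 0 := by rw [← hbE, hgdef, coordval]; simp
  have gZ : g Z = 0 := by rw [← hbZ, hgdef, coordval]; simp
  -- f vanishes on qsub
  have hqf : ∀ x ∈ qsub, f x = 0 := by
    intro x hx
    rw [hq] at hx
    have : qsub ≤ LinearMap.ker f := by
      rw [hq, Submodule.span_le]
      intro y hy
      simp only [Set.mem_insert_iff, Set.mem_singleton_iff] at hy
      rcases hy with rfl | rfl | rfl <;> simp [LinearMap.mem_ker, fZ, fU, fV]
    have := this (by rw [hq]; exact hx)
    simpa [LinearMap.mem_ker] using this
  -- g vanishes on hsub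
  have hhg : ∀ x ∈ hsub, g x = 0 := by
    intro x hx
    have : hsub ≤ LinearMap.ker g := by
      rw [hh, Submodule.span_le]
      intro y hy
      simp only [Set.mem_insert_iff, Set.mem_singleton_iff] at hy
      rcases hy with rfl | rfl <;> simp [LinearMap.mem_ker, gX, gE]
    simpa [LinearMap.mem_ker] using this hx
  -- c • f + g vanishes on bpol
  have hbrel : ∀ x ∈ bpol, c * f x + g x = 0 := by
    intro x hx
    have : bpol ≤ LinearMap.ker (c • f + g) := by
      rw [hbpol, Submodule.span_le]
      intro y hy
      simp only [Set.mem_insert_iff, Set.mem_singleton_iff] at hy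
      rcases hy with rfl | rfl | rfl | rfl <;>
        simp [LinearMap.mem_ker, fE, fZ, fV, fX, fU, gE, gZ, gV, gX, gU,
          map_sub, map_smul, smul_eq_mul, mul_comm]
    have := this hx
    simpa [LinearMap.mem_ker, smul_eq_mul] using this
  intro heq
  have hmem : X - c • U ∈ bpol := by
    rw [hbpol]
    exact Submodule.subset_span (by simp)
  rw [heq] at hmem
  rcases Submodule.mem_sup.mp hmem with ⟨y, hy, z, hz, hyz⟩
  have hgy : g y = 0 := by
    have h1 := hqf y hy.2
    have h2 := hbrel y hy.1
    rw [h1, mul_zero, zero_add] at h2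
    exact h2
  have hgz : g z = 0 := hhg z hz.2
  have : g (X - c • U) = 0 := by rw [← hyz, map_add, hgy, hgz, add_zero]
  rw [map_sub, map_smul, gX, gU, smul_eq_mul, mul_one, zero_sub, neg_eq_zero] at this
  exact hlZ this
end

section
/- In the universal enveloping algebra U(g) of the Lie algebra g with basis {X,U,V,E,Z} and brackets [U,V]=E, [X,U]=V, [X,V]=Z, with β the symmetrization map from S(g) to U(g), the element A = 2UZ − V² satisfies A² = β(ā²) where ā = 2UZ − V² ∈ S(g); equivalently A² = 4U²Z² − 4Zβ(UV²) + V⁴ where β(UV²) = (UV² + VUV + V²U)/3. -/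
open UniversalEnvelopingAlgebra

attribute [local instance 100] LieRing.ofAssociativeRing

lemma key_stmt_9 {R : Type*} [Ring R] (u v z e : R)
    (hzu : z*u = u*z) (hzv : z*v = v*z) (huv : u*v = v*u + e) (hev : e*v = v*e)
    (hze : z*e = e*z) :
    (2*(u*z) - v^2)^2 = 4*(u^2*z^2) - 4*(z*(v*(u*v))) + v^4 := by
  have h1 : ∀ x : R, z*(u*x) = u*(z*x) := fun x => by rw [← mul_assoc, hzu, mul_assoc]
  have h2 : ∀ x : R, z*(v*x) = v*(z*x) := fun x => by rw [← mul_assoc, hzv, mul_assoc]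
  have h3 : ∀ x : R, u*(v*x) = v*(u*x) + e*x := fun x => by
    rw [← mul_assoc, huv, add_mul, mul_assoc]
  have h4 : ∀ x : R, e*(v*x) = v*(e*x) := fun x => by rw [← mul_assoc, hev, mul_assoc]
  have expand : (2*(u*z) - v^2)^2
      = 4*(u*(z*(u*z))) - 2*(u*(z*(v*v))) - 2*(v*(v*(u*z))) + v*(v*(v*v)) := by
    noncomm_ring
  rw [expand]
  simp only [h1, h2, h3, h4, hzu, hzv, huv, hev, hze, mul_add]
  noncomm_ring

/-- In `U(g)` for `g = span{X,U,V,E,Z}` with `[U,V]=E`, `[X,U]=V`, `[X,V]=Z`, the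
element `A = 2UZ − V²` satisfies `A² = β(ā²)` where `β` is PBW symmetrization;
explicitly `A² = 4U²Z² − 4Z·β(UV²) + V⁴` with `β(UV²) = (UV² + VUV + V²U)/3`. -/
theorem stmt_9 (L : Type) [LieRing L] [LieAlgebra ℝ L]
    (X U V E Z : L) (b : Module.Basis (Fin 5) ℝ L) (hb : ⇑b = ![X, U, V, E, Z])
    (hUV : ⁅U, V⁆ = E) (hXU : ⁅X, U⁆ = V) (hXV : ⁅X, V⁆ = Z)
    (hXE : ⁅X, E⁆ = 0) (hXZ : ⁅X, Z⁆ = 0) (hUE : ⁅U, E⁆ = 0) (hUZ : ⁅U, Z⁆ = 0)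
    (hVE : ⁅V, E⁆ = 0) (hVZ : ⁅V, Z⁆ = 0) (hEZ : ⁅E, Z⁆ = 0)
    (A : UniversalEnvelopingAlgebra ℝ L)
    (hA : A = 2 * (ι ℝ U * ι ℝ Z) - (ι ℝ V) ^ 2) :
    A ^ 2 = 4 * ((ι ℝ U) ^ 2 * (ι ℝ Z) ^ 2)
      - 4 * (ι ℝ Z *
          ((3 : ℝ)⁻¹ • (ι ℝ U * (ι ℝ V) ^ 2 + ι ℝ V * ι ℝ U * ι ℝ V
            + (ι ℝ V) ^ 2 * ι ℝ U)))
      + (ι ℝ V) ^ 4 := by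
  set u := ι (L := L) ℝ U
  set v := ι (L := L) ℝ V
  set e := ι (L := L) ℝ E
  set z := ι (L := L) ℝ Z
  have bracket : ∀ a c : L, ι ℝ ⁅a, c⁆ = ι ℝ a * ι ℝ c - ι ℝ c * ι ℝ a := fun a c => by
    rw [LieHom.map_lie, Ring.lie_def]
  have comm : ∀ a c : L, ⁅a, c⁆ = 0 → ι (L := L) ℝ c * ι ℝ a = ι ℝ a * ι ℝ c := by
    intro a c h
    have h2 := bracket a c
    rw [h, map_zero] at h2
    exact (sub_eq_zero.mp h2.symm).symm
  have hzu : z * u = u * z := comm U Z hUZ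
  have hzv : z * v = v * z := comm V Z hVZ
  have hev : e * v = v * e := comm V E hVE
  have hze : z * e = e * z := comm E Z hEZ
  have huv : u * v = v * u + e := by
    have h2 := bracket U V
    rw [hUV] at h2
    change e = u * v - v * u at h2
    rw [h2]; abel
  have hvu : v * u = u * v - e := by rw [huv]; abel
  have e1 : u * v ^ 2 = v * u * v + v * e := by
    rw [pow_two, ← mul_assoc, huv, add_mul, hev]
  have e2 : v ^ 2 * u = v * (u * v) - v * e := by
    rw [pow_two, mul_assoc, hvu, mul_sub]
  have hmid : v * u * v = v * (u * v) := mul_assoc v u v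
  have hsum : (3 : ℝ)⁻¹ • (u * v ^ 2 + v * u * v + v ^ 2 * u) = v * (u * v) := by
    have h3 : u * v ^ 2 + v * u * v + v ^ 2 * u = (3 : ℝ) • (v * (u * v)) := by
      rw [e1, hmid, e2, show (3 : ℝ) = 1 + 1 + 1 by norm_num, add_smul, add_smul, one_smul]
      abel
    rw [h3, inv_smul_smul₀ (by norm_num : (3:ℝ) ≠ 0)]
  rw [hA, hsum]
  exact key_stmt_9 u v z e hzu hzv huv hev hze
end

section
/- In the universal enveloping algebra U(g) of the Lie algebra g with basis {X,U,V,E,Z} and brackets [U,V]=E, [X,U]=V, [X,V]=Z, the symmetrization map β: S(g) → U(g) satisfies β⁻¹(A³) = ā³ − 2Z²E², where A = 2UZ − V² ∈ U(g) and ā = 2UZ − V² ∈ S(g). -/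
open UniversalEnvelopingAlgebra
set_option maxHeartbeats 1000000 in
/-- In `U(g)` for `g = span{X,U,V,E,Z}` with `[U,V]=E`, `[X,U]=V`, `[X,V]=Z`, the PBW
symmetrization `β : S(g) → U(g)` satisfies `β⁻¹(A³) = ā³ − 2Z²E²` for `A = 2UZ − V²`;
equivalently, `A³ = β(ā³) − 2Z²E²`, where (since `Z` and `E` are central in `g`)
`β(ā³) = 8U³Z³ − 12Z²·β(U²V²) + 6Z·β(UV⁴) − V⁶` with
`β(U²V²) = (UUVV + UVUV + UVVU + VUUV + VUVU + VVUU)/6` and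
`β(UV⁴) = (UV⁴ + VUV³ + V²UV² + V³UV + V⁴U)/5`. -/
theorem stmt_10 (L : Type) [LieRing L] [LieAlgebra ℝ L]
    (X U V E Z : L) (b : Module.Basis (Fin 5) ℝ L) (hb : ⇑b = ![X, U, V, E, Z])
    (hUV : ⁅U, V⁆ = E) (hXU : ⁅X, U⁆ = V) (hXV : ⁅X, V⁆ = Z)
    (hXE : ⁅X, E⁆ = 0) (hXZ : ⁅X, Z⁆ = 0) (hUE : ⁅U, E⁆ = 0) (hUZ : ⁅U, Z⁆ = 0)
    (hVE : ⁅V, E⁆ = 0) (hVZ : ⁅V, Z⁆ = 0) (hEZ : ⁅E, Z⁆ = 0)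
    (A : UniversalEnvelopingAlgebra ℝ L)
    (hA : A = 2 * (ι ℝ U * ι ℝ Z) - (ι ℝ V) ^ 2) :
    A ^ 3 =
      8 * ((ι ℝ U) ^ 3 * (ι ℝ Z) ^ 3)
      - 12 * ((ι ℝ Z) ^ 2 *
          ((6 : ℝ)⁻¹ • (ι ℝ U * ι ℝ U * ι ℝ V * ι ℝ V
            + ι ℝ U * ι ℝ V * ι ℝ U * ι ℝ V
            + ι ℝ U * ι ℝ V * ι ℝ V * ι ℝ U
            + ι ℝ V * ι ℝ U * ι ℝ U * ι ℝ V
            + ι ℝ V * ι ℝ U * ι ℝ V * ι ℝ U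
            + ι ℝ V * ι ℝ V * ι ℝ U * ι ℝ U)))
      + 6 * (ι ℝ Z *
          ((5 : ℝ)⁻¹ • (ι ℝ U * (ι ℝ V) ^ 4
            + ι ℝ V * ι ℝ U * (ι ℝ V) ^ 3
            + (ι ℝ V) ^ 2 * ι ℝ U * (ι ℝ V) ^ 2
            + (ι ℝ V) ^ 3 * ι ℝ U * ι ℝ V
            + (ι ℝ V) ^ 4 * ι ℝ U)))
      - (ι ℝ V) ^ 6
      - 2 * ((ι ℝ Z) ^ 2 * (ι ℝ E) ^ 2) := by
  set u := ι (L := L) ℝ U with hu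
  set v := ι (L := L) ℝ V with hv
  set e := ι (L := L) ℝ E with he
  set z := ι (L := L) ℝ Z with hz
  have lie : ∀ a b : L, ι ℝ ⁅a,b⁆ = ι ℝ a * ι ℝ b - ι ℝ b * ι ℝ a := by
    letI := LieRing.ofAssociativeRing (A := UniversalEnvelopingAlgebra ℝ L)
    intro a b; rw [(ι ℝ : L →ₗ⁅ℝ⁆ _).map_lie, Ring.lie_def]
  have comm : ∀ a b : L, ⁅a,b⁆ = 0 → ι ℝ b * ι ℝ a = ι ℝ a * ι ℝ b := by
    intro a b h
    have := lie a b; rw [h, map_zero] at this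
    exact (sub_eq_zero.mp this.symm).symm
  have hvu : v * u = u * v - e := by
    have := lie U V; rw [hUV] at this; rw [← hu, ← hv, ← he] at this; rw [this]; abel
  have hvu' : ∀ x, v * (u * x) = u * (v * x) - e * x := by
    intro x; rw [← mul_assoc, hvu, sub_mul, mul_assoc]
  have heu : e * u = u * e := comm U E hUE
  have heu' : ∀ x, e * (u * x) = u * (e * x) := by
    intro x; rw [← mul_assoc, heu, mul_assoc]
  have hev : e * v = v * e := comm V E hVE
  have hev' : ∀ x, e * (v * x) = v * (e * x) := by
    intro x; rw [← mul_assoc, hev, mul_assoc]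
  have hzu : z * u = u * z := comm U Z hUZ
  have hzu' : ∀ x, z * (u * x) = u * (z * x) := by
    intro x; rw [← mul_assoc, hzu, mul_assoc]
  have hzv : z * v = v * z := comm V Z hVZ
  have hzv' : ∀ x, z * (v * x) = v * (z * x) := by
    intro x; rw [← mul_assoc, hzv, mul_assoc]
  have hze : z * e = e * z := comm E Z hEZ
  have hze' : ∀ x, z * (e * x) = e * (z * x) := by
    intro x; rw [← mul_assoc, hze, mul_assoc]
  have cnum : ∀ (n : ℕ) [n.AtLeastTwo] (x : UniversalEnvelopingAlgebra ℝ L),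
      (OfNat.ofNat n : UniversalEnvelopingAlgebra ℝ L) * x = (OfNat.ofNat n : ℝ) • x := by
    intro n _ x; rw [Algebra.smul_def, map_ofNat]
  subst hA
  simp only [cnum, pow_succ, pow_zero, one_mul, mul_add, add_mul, mul_sub, sub_mul,
    mul_assoc, mul_smul_comm, smul_mul_assoc, smul_add, smul_sub,
    hvu, hvu', heu, heu', hev, hev', hzu, hzu', hzv, hzv', hze, hze']
  module
end

section
/- In the Lie algebra g with basis {X,U,V,E,Z} and brackets [U,V]=E, [X,U]=V, [X,V]=Z, with h = span{X,E} and λ = E*, every l ∈ g* with l(E)=1, l(X)=0 and l(Z)≠0 satisfies the lagrangian condition: dim(h·l) = (1/2) dim(g·l), where h·l = {l∘ad(H) : H ∈ h} and g·l = {l∘ad(Y) : Y ∈ g} (explicitly dim(h·l)=1 and dim(g·l)=2). -/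
/-- For the Lie algebra `g = span{X,U,V,E,Z}` with brackets `[U,V]=E`, `[X,U]=V`,
`[X,V]=Z`, `h = span{X,E}`, and `l ∈ g*` with `l(E)=1`, `l(X)=0`, `l(Z)≠0`, the
lagrangian condition holds: `dim(h·l) = 1`, `dim(g·l) = 2`, so
`dim(h·l) = (1/2)·dim(g·l)`, where `h·l` and `g·l` are the spans of the coadjoint
tangent vectors `(ad* Y)l : w ↦ −l([Y,w])`. -/
theorem stmt_13 (L : Type) [LieRing L] [LieAlgebra ℝ L]
    (X U V E Z : L) (b : Module.Basis (Fin 5) ℝ L) (hb : ⇑b = ![X, U, V, E, Z])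
    (hUV : ⁅U, V⁆ = E) (hXU : ⁅X, U⁆ = V) (hXV : ⁅X, V⁆ = Z)
    (hXE : ⁅X, E⁆ = 0) (hXZ : ⁅X, Z⁆ = 0) (hUE : ⁅U, E⁆ = 0) (hUZ : ⁅U, Z⁆ = 0)
    (hVE : ⁅V, E⁆ = 0) (hVZ : ⁅V, Z⁆ = 0) (hEZ : ⁅E, Z⁆ = 0)
    (l : L →ₗ[ℝ] ℝ) (hlE : l E = 1) (hlX : l X = 0) (hlZ : l Z ≠ 0)
    (hOrbit gOrbit : Submodule ℝ (L →ₗ[ℝ] ℝ))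
    (hhO : hOrbit = Submodule.span ℝ
      {f : L →ₗ[ℝ] ℝ | ∃ H ∈ Submodule.span ℝ ({X, E} : Set L),
        ∀ w : L, f w = -(l ⁅H, w⁆)})
    (hgO : gOrbit = Submodule.span ℝ
      {f : L →ₗ[ℝ] ℝ | ∃ Y : L, ∀ w : L, f w = -(l ⁅Y, w⁆)}) :
    Module.finrank ℝ ↥hOrbit = 1 ∧ Module.finrank ℝ ↥gOrbit = 2 ∧
      Module.finrank ℝ ↥gOrbit = 2 * Module.finrank ℝ ↥hOrbit := by
  -- reversed brackets
  have hUX : ⁅U, X⁆ = -V := by rw [← lie_skew, hXU]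
  have hVX : ⁅V, X⁆ = -Z := by rw [← lie_skew, hXV]
  have hVU : ⁅V, U⁆ = -E := by rw [← lie_skew, hUV]
  have hEX : ⁅E, X⁆ = 0 := by rw [← lie_skew, hXE, neg_zero]
  have hEU : ⁅E, U⁆ = 0 := by rw [← lie_skew, hUE, neg_zero]
  have hEV : ⁅E, V⁆ = 0 := by rw [← lie_skew, hVE, neg_zero]
  have hZX : ⁅Z, X⁆ = 0 := by rw [← lie_skew, hXZ, neg_zero]
  have hZU : ⁅Z, U⁆ = 0 := by rw [← lie_skew, hUZ, neg_zero]
  have hZV : ⁅Z, V⁆ = 0 := by rw [← lie_skew, hVZ, neg_zero]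
  have hZE : ⁅Z, E⁆ = 0 := by rw [← lie_skew, hEZ, neg_zero]
  -- decomposition of any element in the basis
  have hdec : ∀ w : L, ∃ a c d e f : ℝ, w = a • X + c • U + d • V + e • E + f • Z := by
    intro w
    refine ⟨b.repr w 0, b.repr w 1, b.repr w 2, b.repr w 3, b.repr w 4, ?_⟩
    have h := b.sum_repr w
    rw [Fin.sum_univ_five] at h
    simp only [hb, Matrix.cons_val_zero, Matrix.cons_val_one, Matrix.head_cons,
      Matrix.cons_val_two, Matrix.tail_cons, Matrix.cons_val_three,
      Matrix.cons_val_four, Matrix.head_fin_const] at h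
    exact h.symm
  -- E and Z are central
  have hEw : ∀ w : L, ⁅E, w⁆ = 0 := by
    intro w
    obtain ⟨a, c, d, e, f, rfl⟩ := hdec w
    simp [lie_add, lie_smul, hEX, hEU, hEV, hEZ]
  have hZw : ∀ w : L, ⁅Z, w⁆ = 0 := by
    intro w
    obtain ⟨a, c, d, e, f, rfl⟩ := hdec w
    simp [lie_add, lie_smul, hZX, hZU, hZV, hZE]
  -- the coadjoint tangent maps
  set φ : L → (L →ₗ[ℝ] ℝ) := fun Y => -(l ∘ₗ ((LieAlgebra.ad ℝ L) Y)) with hφdef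
  have hφ : ∀ Y w : L, φ Y w = -(l ⁅Y, w⁆) := by
    intro Y w
    simp [hφdef, LieAlgebra.ad_apply]
  have hφXV : φ X V = -(l Z) := by rw [hφ, hXV]
  have hφX_ne : φ X ≠ 0 := by
    intro h
    apply hlZ
    have := congrArg (fun f : L →ₗ[ℝ] ℝ => f V) h
    simp [hφXV] at this
    exact this
  -- hOrbit is the span of φ X
  have hO1 : hOrbit = Submodule.span ℝ {φ X} := by
    rw [hhO]
    apply le_antisymm
    · rw [Submodule.span_le]
      rintro f ⟨H, hH, hf⟩
      rw [Submodule.mem_span_pair] at hH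
      obtain ⟨a, c, rfl⟩ := hH
      have hfeq : f = a • φ X := by
        ext w
        rw [hf w]
        simp [hφ, add_lie, smul_lie, hEw w]
      rw [hfeq]
      exact Submodule.smul_mem _ _ (Submodule.mem_span_singleton_self _)
    · rw [Submodule.span_le, Set.singleton_subset_iff]
      apply Submodule.subset_span
      exact ⟨X, Submodule.subset_span (by simp), fun w => hφ X w⟩
  -- gOrbit is the span of φ U and φ V
  have hO2 : gOrbit = Submodule.span ℝ {φ U, φ V} := by
    rw [hgO]
    apply le_antisymm
    · rw [Submodule.span_le]
      rintro f ⟨Y, hf⟩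
      obtain ⟨a, c, d, e, g, rfl⟩ := hdec Y
      have hfeq : f = (a * l Z + c) • φ U + (d - a * l V) • φ V := by
        ext w
        rw [hf w]
        obtain ⟨a', c', d', e', g', rfl⟩ := hdec w
        simp [hφ, add_lie, lie_add, smul_lie, lie_smul, hEw, hZw, hXU, hXV, hXE,
          hXZ, hUV, hUE, hUZ, hVE, hVZ, hUX, hVX, hVU, hlE, map_add, map_smul]
        ring
      rw [hfeq]
      exact Submodule.add_mem _
        (Submodule.smul_mem _ _ (Submodule.subset_span (by simp)))
        (Submodule.smul_mem _ _ (Submodule.subset_span (by simp)))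
    · rw [Submodule.span_le]
      rintro f (rfl | rfl)
      · exact Submodule.subset_span ⟨U, fun w => hφ U w⟩
      · exact Submodule.subset_span ⟨V, fun w => hφ V w⟩
  -- dimension computations
  have h1 : Module.finrank ℝ ↥hOrbit = 1 := by
    rw [hO1]
    exact finrank_span_singleton hφX_ne
  have hind : LinearIndependent ℝ ![φ U, φ V] := by
    rw [LinearIndependent.pair_iff]
    intro s t hst
    have e1 := congrArg (fun f : L →ₗ[ℝ] ℝ => f V) hst
    have e2 := congrArg (fun f : L →ₗ[ℝ] ℝ => f U) hst
    simp [hφ, hUV, hVU, hlE] at e1 e2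
    constructor <;> linarith
  have hsetrange : ({φ U, φ V} : Set (L →ₗ[ℝ] ℝ)) = Set.range ![φ U, φ V] := by
    ext f
    simp only [Set.mem_insert_iff, Set.mem_singleton_iff, Set.mem_range,
      Fin.exists_fin_two, Matrix.cons_val_zero, Matrix.cons_val_one, Matrix.head_cons]
    tauto
  have h2 : Module.finrank ℝ ↥gOrbit = 2 := by
    rw [hO2, hsetrange, finrank_span_eq_card hind]
    simp
  exact ⟨h1, h2, by rw [h1, h2]⟩
end

section
/- In the Lie algebra g with basis {X,U,V,E,Z} and brackets [U,V]=E, [X,U]=V, [X,V]=Z, the algebra of H-invariant polynomials S(q)^h, where q = span{Z,U,V} and the h = span{X,E}-action is the quotient coadjoint action, is the polynomial algebra generated by Z and 2ZU − V²: a polynomial P(Z,U,V) satisfies X·P = 0 (where X acts by the derivation V∂_U + Z∂_V induced from the coadjoint action modulo h⊥-translations with λ(E)=1) if and only if P ∈ ℝ[Z, 2ZU − V²]. -/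
open MvPolynomial

noncomputable def Wp : MvPolynomial (Fin 3) ℝ := C 2 * (X 0 * X 1) - X 2 ^ 2

noncomputable def Phi : MvPolynomial (Fin 2) ℝ →ₐ[ℝ] MvPolynomial (Fin 3) ℝ :=
  aeval ![X 0, Wp]

section Dfacts
variable (D : MvPolynomial (Fin 3) ℝ → MvPolynomial (Fin 3) ℝ)
  (hD : ∀ P, D P = X 2 * pderiv (1 : Fin 3) P + X 0 * pderiv (2 : Fin 3) P)
include hD

lemma Dadd (a b : MvPolynomial (Fin 3) ℝ) : D (a + b) = D a + D b := by
  simp only [hD, map_add]; ring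

lemma DC (r : ℝ) : D (C r) = 0 := by simp [hD]

lemma Dmul (a b : MvPolynomial (Fin 3) ℝ) : D (a * b) = D a * b + a * D b := by
  simp only [hD, pderiv_mul]; ring

lemma DX0 : D (X 0) = 0 := by simp [hD]

lemma DX1 : D (X 1) = X 2 := by simp [hD]

lemma DX2 : D (X 2) = X 0 := by simp [hD]

lemma DW : D Wp = 0 := by
  simp only [Wp, hD]
  simp [pderiv_X]
  rw [show (C (2:ℝ) : MvPolynomial (Fin 3) ℝ) = 2 by simp [map_ofNat]]
  ring

end Dfacts

@[simp] lemma PhiX0 : Phi (X 0) = X 0 := by simp [Phi]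

@[simp] lemma PhiX1 : Phi (X 1) = Wp := by simp [Phi]

@[simp] lemma PhiC (r : ℝ) : Phi (C r) = C r := by
  simp [Phi, algebraMap_eq]

section Dfacts2
variable (D : MvPolynomial (Fin 3) ℝ → MvPolynomial (Fin 3) ℝ)
  (hD : ∀ P, D P = X 2 * pderiv (1 : Fin 3) P + X 0 * pderiv (2 : Fin 3) P)
include hD

lemma Done : D 1 = 0 := by
  have := DC D hD 1; simpa using this

lemma Dpow_zero (a : MvPolynomial (Fin 3) ℝ) (ha : D a = 0) (n : ℕ) : D (a ^ n) = 0 := by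
  induction n with
  | zero => simpa using Done D hD
  | succ k ih =>
      rw [pow_succ, Dmul D hD, ih, ha]; ring

lemma DPhi (G : MvPolynomial (Fin 2) ℝ) : D (Phi G) = 0 := by
  induction G using MvPolynomial.induction_on with
  | C r => rw [PhiC]; exact DC D hD r
  | add p q hp hq => rw [map_add, Dadd D hD, hp, hq]; ring
  | mul_X p i hp =>
      rw [map_mul, Dmul D hD, hp]
      fin_cases i
      · simp [DX0 D hD]
      · simp [DW D hD]

lemma DVpow (n : ℕ) :
    D (X 2 ^ n) = (n : MvPolynomial (Fin 3) ℝ) * X 2 ^ (n - 1) * X 0 := by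
  induction n with
  | zero => rw [pow_zero, Done D hD]; simp
  | succ k ih =>
      rw [pow_succ, Dmul D hD, ih, DX2 D hD]
      cases k with
      | zero => simp
      | succ m =>
          simp only [Nat.add_sub_cancel]
          push_cast
          ring

end Dfacts2

noncomputable def Th (q : Polynomial (MvPolynomial (Fin 2) ℝ)) : MvPolynomial (Fin 3) ℝ :=
  Polynomial.eval₂ Phi.toRingHom (X 2) q

@[simp] lemma Th_zero : Th 0 = 0 := Polynomial.eval₂_zero _ _

@[simp] lemma Th_C (G : MvPolynomial (Fin 2) ℝ) : Th (Polynomial.C G) = Phi G :=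
  Polynomial.eval₂_C _ _

@[simp] lemma Th_X : Th Polynomial.X = X 2 := Polynomial.eval₂_X _ _

@[simp] lemma Th_add (q r) : Th (q + r) = Th q + Th r := Polynomial.eval₂_add _ _

@[simp] lemma Th_mul (q r) : Th (q * r) = Th q * Th r := Polynomial.eval₂_mul _ _

@[simp] lemma Th_pow (q) (n : ℕ) : Th (q ^ n) = Th q ^ n := Polynomial.eval₂_pow _ _ _

section Dfacts3
variable (D : MvPolynomial (Fin 3) ℝ → MvPolynomial (Fin 3) ℝ)
  (hD : ∀ P, D P = X 2 * pderiv (1 : Fin 3) P + X 0 * pderiv (2 : Fin 3) P)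
include hD

lemma DTh (q : Polynomial (MvPolynomial (Fin 2) ℝ)) :
    D (Th q) = X 0 * Th (Polynomial.derivative q) := by
  induction q using Polynomial.induction_on with
  | C a => rw [Th_C, DPhi D hD]; simp
  | add p q hp hq => rw [Th_add, Dadd D hD, hp, hq, map_add, Th_add]; ring
  | monomial n a _ =>
      rw [Th_mul, Th_C, Th_pow, Th_X, Dmul D hD, DPhi D hD, DVpow D hD,
        Polynomial.derivative_C_mul_X_pow, Th_mul, Th_C, Th_pow, Th_X]
      simp only [Nat.add_sub_cancel, map_mul, map_add, map_one, map_natCast]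
      push_cast
      ring

end Dfacts3

lemma rep (P : MvPolynomial (Fin 3) ℝ) :
    ∃ (N : ℕ) (q : Polynomial (MvPolynomial (Fin 2) ℝ)),
      (C 2 * X 0) ^ N * P = Th q := by
  induction P using MvPolynomial.induction_on with
  | C r => exact ⟨0, Polynomial.C (C r), by simp⟩
  | add p q hp hq =>
      obtain ⟨N₁, q₁, h₁⟩ := hp
      obtain ⟨N₂, q₂, h₂⟩ := hq
      refine ⟨N₁ + N₂, (Polynomial.C (C 2 * X 0 : MvPolynomial (Fin 2) ℝ)) ^ N₂ * q₁
        + (Polynomial.C (C 2 * X 0 : MvPolynomial (Fin 2) ℝ)) ^ N₁ * q₂, ?_⟩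
      simp only [Th_add, Th_mul, Th_pow, Th_C, map_mul, PhiC, PhiX0]
      linear_combination (C 2 * X 0 : MvPolynomial (Fin 3) ℝ) ^ N₂ * h₁ +
        (C 2 * X 0 : MvPolynomial (Fin 3) ℝ) ^ N₁ * h₂
  | mul_X p i hp =>
      obtain ⟨N, q, h⟩ := hp
      fin_cases i
      · refine ⟨N, q * Polynomial.C (X 0), ?_⟩
        simp only [Fin.zero_eta, Fin.mk_one, Fin.reduceFinMk, Th_mul, Th_C, PhiX0]
        linear_combination (X 0 : MvPolynomial (Fin 3) ℝ) * h
      · refine ⟨N + 1, q * (Polynomial.C (X 1) + Polynomial.X ^ 2), ?_⟩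
        simp only [Fin.zero_eta, Fin.mk_one, Fin.reduceFinMk, Th_mul, Th_add, Th_C, Th_pow,
          Th_X, PhiX1, Wp]
        rw [pow_succ]
        linear_combination (C 2 * X 0 * X 1 : MvPolynomial (Fin 3) ℝ) * h
      · refine ⟨N, q * Polynomial.X, ?_⟩
        simp only [Fin.zero_eta, Fin.mk_one, Fin.reduceFinMk, Th_mul, Th_X]
        linear_combination (X 2 : MvPolynomial (Fin 3) ℝ) * h

lemma zero_of_caeval_zero {n : ℕ} (F : MvPolynomial (Fin n) ℝ)
    (h : ∀ p : Fin n → ℂ, aeval p F = 0) : F = 0 := by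
  have hmap : map (algebraMap ℝ ℂ) F = map (algebraMap ℝ ℂ) 0 := by
    rw [map_zero]
    apply MvPolynomial.funext
    intro x
    rw [eval_map, ← aeval_def, h x]; simp
  exact MvPolynomial.map_injective _ (algebraMap ℝ ℂ).injective hmap

lemma aeval_Phi (pt : Fin 3 → ℂ) (G : MvPolynomial (Fin 2) ℝ) :
    aeval pt (Phi G) = aeval ![pt 0, 2 * pt 0 * pt 1 - pt 2 ^ 2] G := by
  show (aeval pt) ((aeval ![X 0, Wp]) G) = _
  rw [comp_aeval_apply]
  have hv : (fun i => (aeval pt) (![(X 0 : MvPolynomial (Fin 3) ℝ), Wp] i))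
      = ![pt 0, 2 * pt 0 * pt 1 - pt 2 ^ 2] := by
    funext i
    fin_cases i
    · simp
    · simp [Wp, map_ofNat]; ring
  rw [hv]

lemma Th_inj (q : Polynomial (MvPolynomial (Fin 2) ℝ)) (h : Th q = 0) : q = 0 := by
  apply Polynomial.ext
  intro j
  rw [Polynomial.coeff_zero]
  set G := q.coeff j with hG
  suffices hXG : (X 0 : MvPolynomial (Fin 2) ℝ) * G = 0 by
    rcases mul_eq_zero.1 hXG with h' | h'
    · exact absurd h' (MvPolynomial.X_ne_zero _)
    · exact h'
  apply zero_of_caeval_zero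
  intro p
  rw [map_mul, aeval_X]
  by_cases hp : p 0 = 0
  · rw [hp]; ring
  · suffices h2 : aeval p G = 0 by rw [h2]; ring
    set χ : MvPolynomial (Fin 2) ℝ →+* ℂ :=
      ((aeval ![p 0, p 1] : MvPolynomial (Fin 2) ℝ →ₐ[ℝ] ℂ) : MvPolynomial (Fin 2) ℝ →+* ℂ)
      with hχ
    have hmapq : q.map χ = 0 := by
      apply Polynomial.zero_of_eval_zero
      intro v
      set pt : Fin 3 → ℂ := ![p 0, (p 1 + v ^ 2) / (2 * p 0), v] with hpt
      have h0 : Polynomial.eval₂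
          (((aeval pt : MvPolynomial (Fin 3) ℝ →ₐ[ℝ] ℂ) :
            MvPolynomial (Fin 3) ℝ →+* ℂ).comp Phi.toRingHom)
          (((aeval pt : MvPolynomial (Fin 3) ℝ →ₐ[ℝ] ℂ) :
            MvPolynomial (Fin 3) ℝ →+* ℂ) (X 2 : MvPolynomial (Fin 3) ℝ)) q = 0 := by
        rw [← Polynomial.hom_eval₂]
        show (aeval pt) (Th q) = 0
        rw [h, map_zero]
      have hcomp : (((aeval pt : MvPolynomial (Fin 3) ℝ →ₐ[ℝ] ℂ) :
          MvPolynomial (Fin 3) ℝ →+* ℂ).comp Phi.toRingHom) = χ := by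
        apply RingHom.ext
        intro a
        show (aeval pt) (Phi a) = (aeval ![p 0, p 1]) a
        rw [aeval_Phi]
        have hveq : ![pt 0, 2 * pt 0 * pt 1 - pt 2 ^ 2] = ![p 0, p 1] := by
          funext i
          fin_cases i
          · simp [hpt]
          · show 2 * pt 0 * pt 1 - pt 2 ^ 2 = p 1
            simp only [hpt, Matrix.cons_val_zero, Matrix.cons_val_one, Matrix.head_cons,
              Matrix.cons_val_two, Matrix.tail_cons]
            field_simp
            ring
        rw [hveq]
      have hx2 : ((aeval pt : MvPolynomial (Fin 3) ℝ →ₐ[ℝ] ℂ) :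
          MvPolynomial (Fin 3) ℝ →+* ℂ) (X 2 : MvPolynomial (Fin 3) ℝ) = v := by simp [hpt]
      rw [hcomp, hx2] at h0
      rw [Polynomial.eval_map]
      exact h0
    have : χ G = 0 := by
      rw [hG, ← Polynomial.coeff_map, hmapq, Polynomial.coeff_zero]
    have hpeq : p = ![p 0, p 1] := by
      funext i; fin_cases i <;> simp
    rw [hpeq]
    exact this

lemma sub_sigma_dvd (a : MvPolynomial (Fin 2) ℝ) :
    (X 0 : MvPolynomial (Fin 2) ℝ) ∣ a - aeval ![0, X 1] a := by
  induction a using MvPolynomial.induction_on with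
  | C r => simp [algebraMap_eq]
  | add p q hp hq =>
      rw [map_add, show p + q - (aeval ![0, X 1] p + aeval ![0, X 1] q)
        = (p - aeval ![0, X 1] p) + (q - aeval ![0, X 1] q) by ring]
      exact dvd_add hp hq
  | mul_X p i hp =>
      rw [map_mul]
      fin_cases i <;> simp only [Fin.zero_eta, Fin.mk_one, Fin.isValue]
      · simp only [aeval_X, Matrix.cons_val_zero, mul_zero, sub_zero]
        exact dvd_mul_left _ _
      · simp only [aeval_X, Matrix.cons_val_one, Matrix.head_cons, Matrix.cons_val_zero]
        rw [show p * X 1 - (aeval ![0, X 1]) p * X 1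
          = (p - aeval ![0, X 1] p) * X 1 by ring]
        exact hp.mul_right _

lemma desc : ∀ (N : ℕ) (P : MvPolynomial (Fin 3) ℝ) (a : MvPolynomial (Fin 2) ℝ),
    X 0 ^ N * P = Phi a → ∃ b, P = Phi b := by
  intro N
  induction N with
  | zero => exact fun P a h => ⟨a, by simpa using h⟩
  | succ k ih =>
      intro P a h
      have hs : aeval ![(0 : MvPolynomial (Fin 2) ℝ), X 1] a = 0 := by
        apply zero_of_caeval_zero
        intro p
        rw [comp_aeval_apply]
        obtain ⟨v, hv⟩ := IsAlgClosed.exists_pow_nat_eq (-(p 1)) (by norm_num : 0 < 2)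
        have h0 := congrArg (aeval (![0, 0, v] : Fin 3 → ℂ)) h
        rw [map_mul, map_pow, aeval_X, aeval_Phi] at h0
        simp only [Matrix.cons_val_zero] at h0
        rw [zero_pow (Nat.succ_ne_zero k), zero_mul] at h0
        have hveq : (fun i => (aeval p) ((![0, X 1] : Fin 2 → MvPolynomial (Fin 2) ℝ) i))
            = ![(0 : ℂ), 2 * 0 * 0 - v ^ 2] := by
          funext i
          fin_cases i
          · simp
          · show (aeval p) (X 1) = 2 * 0 * 0 - v ^ 2
            rw [aeval_X]
            rw [show (2 : ℂ) * 0 * 0 - v ^ 2 = -(v ^ 2) by ring, hv, neg_neg]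
        rw [hveq]
        exact h0.symm
      have hdvd : (X 0 : MvPolynomial (Fin 2) ℝ) ∣ a := by
        have := sub_sigma_dvd a
        rwa [hs, sub_zero] at this
      obtain ⟨b, rfl⟩ := hdvd
      rw [map_mul, PhiX0] at h
      have h2 : X 0 ^ k * P = Phi b := by
        have hx : (X 0 : MvPolynomial (Fin 3) ℝ) ≠ 0 := MvPolynomial.X_ne_zero _
        apply mul_left_cancel₀ hx
        rw [← h, pow_succ]
        ring
      exact ih P b h2

lemma Phi_mem (b : MvPolynomial (Fin 2) ℝ) :
    Phi b ∈ Algebra.adjoin ℝ ({X 0, Wp} : Set (MvPolynomial (Fin 3) ℝ)) := by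
  induction b using MvPolynomial.induction_on with
  | C r =>
      rw [PhiC, ← algebraMap_eq]
      exact Subalgebra.algebraMap_mem _ r
  | add p q hp hq => rw [map_add]; exact add_mem hp hq
  | mul_X p i hp =>
      rw [map_mul]
      apply mul_mem hp
      fin_cases i <;> simp only [Fin.zero_eta, Fin.mk_one, Fin.isValue]
      · rw [PhiX0]
        exact Algebra.subset_adjoin (Set.mem_insert _ _)
      · rw [PhiX1]
        exact Algebra.subset_adjoin (Set.mem_insert_of_mem _ rfl)

/-- For the Lie algebra `g = span{X,U,V,E,Z}` with brackets `[U,V]=E`, `[X,U]=V`,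
`[X,V]=Z`, `h = span{X,E}`, `λ = E*`, `q = span{Z,U,V}`, identify `S(q) ≅ ℝ[Z,U,V]`
(coordinates: variable `0 = Z`, `1 = U`, `2 = V`); the generator `X` of `h` acts on
`ℝ[Z,U,V]` by the derivation `D = V∂_U + Z∂_V` (and `E` acts trivially).  Then the
invariant algebra `S(q)^h = ker D` is exactly the polynomial algebra
`ℝ[Z, 2ZU − V²]`: a polynomial `P` satisfies `X·P = 0` iff `P ∈ ℝ[Z, 2ZU − V²]`. -/
theorem stmt_14 (D : MvPolynomial (Fin 3) ℝ → MvPolynomial (Fin 3) ℝ)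
    (hD : ∀ P, D P = X 2 * pderiv (1 : Fin 3) P + X 0 * pderiv (2 : Fin 3) P) :
    ∀ P : MvPolynomial (Fin 3) ℝ,
      D P = 0 ↔
        P ∈ Algebra.adjoin ℝ
          ({X 0, C 2 * (X 0 * X 1) - (X 2) ^ 2} : Set (MvPolynomial (Fin 3) ℝ)) := by
  intro P
  have hset : ({X 0, C 2 * (X 0 * X 1) - (X 2) ^ 2} : Set (MvPolynomial (Fin 3) ℝ))
      = {X 0, Wp} := rfl
  rw [hset]
  constructor
  · intro hP
    obtain ⟨N, q, hq⟩ := rep P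
    have hD2 : D (C 2 * X 0 : MvPolynomial (Fin 3) ℝ) = 0 := by
      rw [Dmul D hD, DC D hD, DX0 D hD]; ring
    have h1 : D ((C 2 * X 0) ^ N * P) = 0 := by
      rw [Dmul D hD, hP, Dpow_zero D hD _ hD2 N]; ring
    rw [hq, DTh D hD] at h1
    have h2 : Th (Polynomial.derivative q) = 0 := by
      rcases mul_eq_zero.1 h1 with h' | h'
      · exact absurd h' (MvPolynomial.X_ne_zero _)
      · exact h'
    have h3 : Polynomial.derivative q = 0 := Th_inj _ h2
    have h4 : q = Polynomial.C (q.coeff 0) :=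
      Polynomial.eq_C_of_natDegree_eq_zero
        (Polynomial.natDegree_eq_zero_of_derivative_eq_zero h3)
    rw [h4, Th_C] at hq
    have h5 : X 0 ^ N * (C 2 ^ N * P) = Phi (q.coeff 0) := by
      rw [← hq]; ring
    obtain ⟨b, hb⟩ := desc N _ _ h5
    have h6 : P = Phi (C ((2 : ℝ)⁻¹ ^ N) * b) := by
      rw [map_mul, PhiC, ← hb, map_pow]
      rw [show (C ((2:ℝ)⁻¹) : MvPolynomial (Fin 3) ℝ) ^ N * (C 2 ^ N * P)
        = (C ((2:ℝ)⁻¹) * C 2) ^ N * P by ring, ← map_mul]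
      norm_num
    rw [h6]
    exact Phi_mem _
  · intro hp
    refine Algebra.adjoin_induction ?_ ?_ ?_ ?_ hp
    · intro x hx
      rcases hx with rfl | hx
      · exact DX0 D hD
      · rw [Set.mem_singleton_iff] at hx
        rw [hx]
        exact DW D hD
    · intro r
      rw [algebraMap_eq]
      exact DC D hD r
    · intro x y _ _ hx hy
      rw [Dadd D hD, hx, hy, add_zero]
    · intro x y _ _ hx hy
      rw [Dmul D hD, hx, hy]
      ring
end

section
/- Let D = V∂_U + Z∂_V be a derivation on ℝ[Z,U,V]. Then ker D = ℝ[Z, 2ZU − V²]. -/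
open MvPolynomial


noncomputable section
namespace Stmt15

abbrev R3 := MvPolynomial (Fin 3) ℝ

lemma C2 : (C (2:ℝ) : R3) = 2 := map_ofNat _ 2

def Dop (p : R3) : R3 := X 2 * pderiv 1 p + X 0 * pderiv 2 p

lemma Dop_add (p q : R3) : Dop (p + q) = Dop p + Dop q := by
  simp [Dop]; ring

lemma Dop_C (r : ℝ) : Dop (C r) = 0 := by simp [Dop]

lemma Dop_mul (p q : R3) : Dop (p * q) = p * Dop q + q * Dop p := by
  simp [Dop, pderiv_mul]; ring

lemma Dop_X0 : Dop (X 0) = 0 := by simp [Dop, pderiv_X]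
lemma Dop_X1 : Dop (X 1) = X 2 := by simp [Dop, pderiv_X]
lemma Dop_X2 : Dop (X 2) = X 0 := by simp [Dop, pderiv_X]

def W : R3 := C 2 * (X 0 * X 1) - (X 2) ^ 2

lemma Dop_W : Dop W = 0 := by
  simp only [Dop, W, map_sub, pderiv_mul, pderiv_X, pderiv_pow, pderiv_C]
  simp [pderiv_X, C2]
  ring

/-- The flow `exp(tD)` as an algebra map to `R3[t]`. -/
def g : Fin 3 → Polynomial R3 :=
  ![Polynomial.C (X 0),
    Polynomial.C (X 1) + Polynomial.C (X 2) * Polynomial.X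
      + Polynomial.C (C (2⁻¹ : ℝ) * X 0) * Polynomial.X ^ 2,
    Polynomial.C (X 2) + Polynomial.C (X 0) * Polynomial.X]

def Θ : R3 →ₐ[ℝ] Polynomial R3 := aeval g

lemma deriv_theta_X : ∀ i : Fin 3, Polynomial.derivative (Θ (X i)) = Θ (Dop (X i)) := by
  intro i
  fin_cases i
  · show Polynomial.derivative (Θ (X 0)) = Θ (Dop (X 0))
    rw [Dop_X0, map_zero]; simp [Θ, g]
  · show Polynomial.derivative (Θ (X 1)) = Θ (Dop (X 1))
    rw [Dop_X1]
    simp [Θ, g]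
    have h2 : (C (2⁻¹:ℝ) : R3) * X 0 * 2 = X 0 := by
      rw [mul_comm, ← mul_assoc, ← C2, ← C_mul]; norm_num
    calc Polynomial.C (C (2⁻¹:ℝ)) * Polynomial.C (X 0 : R3) * ((1 + 1) * Polynomial.X)
        = Polynomial.C ((C (2⁻¹:ℝ)) * X 0 * 2) * Polynomial.X := by
          rw [map_mul, map_mul, map_ofNat]; ring
      _ = Polynomial.C (X 0 : R3) * Polynomial.X := by rw [h2]
  · show Polynomial.derivative (Θ (X 2)) = Θ (Dop (X 2))
    rw [Dop_X2]; simp [Θ, g]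

lemma flow_deriv (p : R3) : Polynomial.derivative (Θ p) = Θ (Dop p) := by
  induction p using MvPolynomial.induction_on with
  | C a =>
      rw [Dop_C, map_zero]
      simp [Θ, aeval_C]
  | add p q hp hq =>
      rw [map_add, Polynomial.derivative_add, hp, hq, Dop_add, map_add]
  | mul_X p i hp =>
      rw [map_mul, Polynomial.derivative_mul, hp, deriv_theta_X, Dop_mul, map_add, map_mul,
        map_mul]
      ring

lemma eval0_theta (p : R3) : Polynomial.aeval (0 : R3) (Θ p) = p := by
  have h : ((Polynomial.aeval (0 : R3)).restrictScalars ℝ).comp Θ = AlgHom.id ℝ R3 := by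
    apply MvPolynomial.algHom_ext
    intro i
    fin_cases i <;> simp [Θ, g]
  calc Polynomial.aeval (0 : R3) (Θ p)
      = (((Polynomial.aeval (0 : R3)).restrictScalars ℝ).comp Θ) p := rfl
    _ = p := by rw [h]; rfl

lemma flow_const {P : R3} (h : Dop P = 0) : Θ P = Polynomial.C P := by
  have hd : Polynomial.derivative (Θ P) = 0 := by rw [flow_deriv, h, map_zero]
  have h1 := Polynomial.eq_C_of_derivative_eq_zero hd
  have h2 : Polynomial.aeval (0 : R3) (Θ P) = (Θ P).coeff 0 := by
    rw [h1]; simp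
  rw [eval0_theta] at h2
  rw [h1, ← h2]

def cpol : R3 := X 1 - C (2⁻¹ : ℝ) * X 2 ^ 2

def δ : R3 →ₐ[ℝ] R3 := aeval ![X 0, X 0 * X 1, X 0 * X 2]

def ν : R3 →ₐ[ℝ] R3 := aeval ![X 0, X 0 * cpol, 0]

def μ : Polynomial R3 →ₐ[ℝ] R3 := Polynomial.aevalTower δ (- X 2)

lemma nu_eq_delta {P : R3} (h : Dop P = 0) : ν P = δ P := by
  have h1 : μ (Θ P) = μ (Polynomial.C P) := by rw [flow_const h]
  have h2 : μ.comp Θ = ν := by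
    apply MvPolynomial.algHom_ext
    intro i
    have hC : (C (2⁻¹:ℝ) : R3) + C (2⁻¹:ℝ) = 1 := by rw [← C_add]; norm_num
    fin_cases i <;>
      simp [μ, Θ, g, δ, ν, cpol, Polynomial.aevalTower] <;>
      linear_combination (X 0 * X 2 ^ 2 : R3) * hC
  have h3 : μ (Polynomial.C P) = δ P := by simp [μ, Polynomial.aevalTower]
  calc ν P = (μ.comp Θ) P := by rw [h2]
    _ = μ (Polynomial.C P) := h1
    _ = δ P := h3

lemma aeval_mem (f : Fin 3 → R3) (S : Subalgebra ℝ R3) (h : ∀ i, f i ∈ S) (p : R3) :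
    aeval f p ∈ S := by
  induction p using MvPolynomial.induction_on with
  | C a => rw [aeval_C]; exact S.algebraMap_mem a
  | add p q hp hq => rw [map_add]; exact add_mem hp hq
  | mul_X p i hp => rw [map_mul, aeval_X]; exact mul_mem hp (h i)

lemma fin3_eq (m : Fin 3 →₀ ℕ) :
    m = Finsupp.single 0 (m 0) + Finsupp.single 1 (m 1) + Finsupp.single 2 (m 2) := by
  ext i
  fin_cases i <;> simp [Finsupp.single_apply]

lemma remap_eq (m : Fin 3 →₀ ℕ) :
    m + Finsupp.single 0 (m 1 + m 2)
      = Finsupp.single 0 (m 0 + (m 1 + m 2)) + Finsupp.single 1 (m 1)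
          + Finsupp.single 2 (m 2) := by
  ext i
  fin_cases i <;> simp [Finsupp.single_apply]

lemma monomial_as (a b c : ℕ) (r : ℝ) :
    (monomial (Finsupp.single 0 a + Finsupp.single 1 b + Finsupp.single 2 c) r : R3)
      = C r * X 0 ^ a * X 1 ^ b * X 2 ^ c := by
  rw [add_assoc, monomial_single_add, monomial_single_add, ← add_zero (Finsupp.single 2 c),
    monomial_single_add, monomial_zero']
  ring

lemma delta_monomial (m : Fin 3 →₀ ℕ) (r : ℝ) :
    δ (monomial m r) = monomial (m + Finsupp.single 0 (m 1 + m 2)) r := by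
  conv_lhs => rw [fin3_eq m]
  rw [remap_eq, monomial_as, monomial_as]
  simp only [map_mul, map_pow, δ, aeval_X, aeval_C, Matrix.cons_val_zero, Matrix.cons_val_one,
    Matrix.head_cons, Matrix.cons_val_two, Matrix.tail_cons, algebraMap_eq]
  ring

lemma delta_repr (p : R3) :
    δ p = ∑ v ∈ p.support, monomial (v + Finsupp.single 0 (v 1 + v 2)) (coeff v p) := by
  conv_lhs => rw [as_sum p]
  rw [map_sum]
  simp_rw [delta_monomial]

lemma psi_inj {b m : Fin 3 →₀ ℕ}
    (hc : b + Finsupp.single 0 (b 1 + b 2) = m + Finsupp.single 0 (m 1 + m 2)) : b = m := by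
  have h1 : b 1 = m 1 := by
    have := congrArg (fun f => f 1) hc
    simpa [Finsupp.single_apply] using this
  have h2 : b 2 = m 2 := by
    have := congrArg (fun f => f 2) hc
    simpa [Finsupp.single_apply] using this
  have h0 : b 0 = m 0 := by
    have := congrArg (fun f => f 0) hc
    simp [Finsupp.single_apply] at this
    omega
  ext i
  fin_cases i <;> assumption

lemma delta_coeff (p : R3) (m : Fin 3 →₀ ℕ) :
    coeff (m + Finsupp.single 0 (m 1 + m 2)) (δ p) = coeff m p := by
  rw [delta_repr, coeff_sum]
  simp_rw [coeff_monomial]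
  rw [Finset.sum_eq_single m]
  · rw [if_pos rfl]
  · intro b _ hbm
    rw [if_neg fun hc => hbm (psi_inj hc)]
  · intro hm
    rw [if_pos rfl, MvPolynomial.notMem_support_iff.mp hm]

lemma delta_inj : Function.Injective δ := by
  intro p q h
  ext m
  rw [← delta_coeff p m, ← delta_coeff q m, h]

lemma delta_supp (p : R3) {n : Fin 3 →₀ ℕ} (hn : n ∈ (δ p).support) :
    n 1 + n 2 ≤ n 0 := by
  rw [delta_repr] at hn
  obtain ⟨v, _, hnv⟩ := Finset.mem_biUnion.mp (MvPolynomial.support_sum hn)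
  have hn' : n = v + Finsupp.single 0 (v 1 + v 2) :=
    Finset.mem_singleton.mp (MvPolynomial.support_monomial_subset hnv)
  subst hn'
  simp [Finsupp.single_apply]

lemma cpol_eq : cpol = X 1 + monomial (Finsupp.single 2 2) (-(2⁻¹:ℝ)) := by
  rw [cpol, ← C_mul_X_pow_eq_monomial, map_neg]
  ring

lemma coeff_cpol_pow (b : ℕ) (s : Fin 3 →₀ ℕ) (hs : s 1 = 0) :
    coeff s (cpol ^ b) = if s = Finsupp.single 2 (2 * b) then (-(2⁻¹:ℝ)) ^ b else 0 := by
  induction b generalizing s with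
  | zero =>
      simp only [pow_zero, coeff_one, mul_zero, Finsupp.single_zero]
      by_cases h : s = 0 <;> simp [h, eq_comm]
  | succ b ih =>
      rw [pow_succ, cpol_eq, mul_add, coeff_add, ← cpol_eq]
      have h1 : coeff s (cpol ^ b * X 1) = 0 := by
        rw [coeff_mul_X']
        simp [Finsupp.mem_support_iff, hs]
      rw [h1, zero_add, coeff_mul_monomial']
      by_cases hle : Finsupp.single 2 2 ≤ s
      · rw [if_pos hle]
        have hs' : (s - Finsupp.single 2 2 : Fin 3 →₀ ℕ) 1 = 0 := by
          rw [Finsupp.tsub_apply]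
          simp [Finsupp.single_apply, hs]
        rw [ih _ hs']
        by_cases heq : s - Finsupp.single 2 2 = Finsupp.single 2 (2 * b)
        · have hseq : s = Finsupp.single 2 (2 * (b + 1)) := by
            have := tsub_add_cancel_of_le hle
            rw [heq] at this
            rw [← this, ← Finsupp.single_add]
            congr 1 <;> ring
          rw [if_pos heq, if_pos hseq, pow_succ]
        · have hsne : s ≠ Finsupp.single 2 (2 * (b + 1)) := by
            intro hc
            apply heq
            rw [hc]
            ext i
            fin_cases i <;> simp [Finsupp.single_apply] <;> omega
          rw [if_neg heq, if_neg hsne, zero_mul]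
      · rw [if_neg hle, if_neg]
        intro hc
        apply hle
        rw [hc]
        intro i
        fin_cases i <;> simp [Finsupp.single_apply] <;> omega

def ρ : MvPolynomial (Fin 2) ℝ →ₐ[ℝ] R3 := aeval ![X 0, X 0 * cpol]

lemma fin2_monomial (m : Fin 2 →₀ ℕ) (q : ℝ) :
    (monomial m q : MvPolynomial (Fin 2) ℝ) = C q * X 0 ^ (m 0) * X 1 ^ (m 1) := by
  have hm : m = Finsupp.single 0 (m 0) + Finsupp.single 1 (m 1) := by
    ext i
    fin_cases i <;> simp [Finsupp.single_apply]
  conv_lhs => rw [hm]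
  rw [monomial_single_add, ← add_zero (Finsupp.single 1 (m 1)), monomial_single_add,
    monomial_zero']
  ring

lemma rho_monomial (m : Fin 2 →₀ ℕ) (q : ℝ) :
    ρ (monomial m q) = C q * (X 0 ^ (m 0 + m 1) * cpol ^ (m 1)) := by
  rw [fin2_monomial]
  simp only [map_mul, map_pow, ρ, aeval_X, aeval_C, Matrix.cons_val_zero, Matrix.cons_val_one,
    Matrix.head_cons, algebraMap_eq]
  rw [mul_pow, pow_add]
  ring

def tgt (a b : ℕ) : Fin 3 →₀ ℕ := Finsupp.single 0 (a + b) + Finsupp.single 2 (2 * b)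

lemma coeff_term (a b a' b' : ℕ) (q : ℝ) :
    coeff (tgt a b) (C q * (X 0 ^ (a' + b') * cpol ^ b'))
      = if a' = a ∧ b' = b then q * (-(2⁻¹:ℝ)) ^ b else 0 := by
  rw [← mul_assoc, C_mul_X_pow_eq_monomial, coeff_monomial_mul']
  by_cases hle : a' + b' ≤ a + b
  · have hle' : Finsupp.single 0 (a' + b') ≤ tgt a b := by
      rw [Finsupp.single_le_iff]
      simp [tgt, Finsupp.single_apply]
      omega
    rw [if_pos hle']
    have hsub : tgt a b - Finsupp.single 0 (a' + b')
        = Finsupp.single 0 (a + b - (a' + b')) + Finsupp.single 2 (2 * b) := by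
      ext i
      rw [Finsupp.tsub_apply]
      fin_cases i <;> simp [tgt, Finsupp.single_apply]
    have h1 : (Finsupp.single 0 (a + b - (a' + b')) + Finsupp.single 2 (2 * b) : Fin 3 →₀ ℕ) 1
        = 0 := by simp [Finsupp.single_apply]
    rw [hsub, coeff_cpol_pow _ _ h1]
    by_cases he : a' = a ∧ b' = b
    · obtain ⟨rfl, rfl⟩ := he
      rw [if_pos ?_, if_pos ⟨rfl, rfl⟩]
      rw [Nat.sub_self, Finsupp.single_zero, zero_add]
    · rw [if_neg, if_neg he, mul_zero]
      intro hc
      apply he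
      have h0 := congrArg (fun f => f 0) hc
      have h2v := congrArg (fun f => f 2) hc
      simp [Finsupp.single_apply] at h0 h2v
      omega
  · rw [if_neg, if_neg]
    · omega
    · rw [Finsupp.single_le_iff]
      simp [tgt, Finsupp.single_apply]
      omega

lemma coeff_rho (F : MvPolynomial (Fin 2) ℝ) (m : Fin 2 →₀ ℕ) :
    coeff (tgt (m 0) (m 1)) (ρ F) = coeff m F * (-(2⁻¹:ℝ)) ^ (m 1) := by
  conv_lhs => rw [as_sum F]
  rw [map_sum, coeff_sum]
  simp_rw [rho_monomial, coeff_term]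
  rw [Finset.sum_eq_single m]
  · rw [if_pos ⟨rfl, rfl⟩]
  · intro b _ hbm
    rw [if_neg]
    intro ⟨h0, h1⟩
    apply hbm
    ext i
    fin_cases i <;> assumption
  · intro hm
    rw [if_pos ⟨rfl, rfl⟩, MvPolynomial.notMem_support_iff.mp hm, zero_mul]

lemma F_bound {F : MvPolynomial (Fin 2) ℝ} {P : R3} (hF : ρ F = δ P)
    {m : Fin 2 →₀ ℕ} (hm : m ∈ F.support) : m 1 ≤ m 0 := by
  have hco := coeff_rho F m
  rw [hF] at hco
  have hne : coeff (tgt (m 0) (m 1)) (δ P) ≠ 0 := by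
    rw [hco]
    exact mul_ne_zero (MvPolynomial.mem_support_iff.mp hm) (pow_ne_zero _ (by norm_num))
  have hb := delta_supp P (MvPolynomial.mem_support_iff.mpr hne)
  simp [tgt, Finsupp.single_apply] at hb
  omega

lemma hard {P : R3} (h : Dop P = 0) :
    P ∈ Algebra.adjoin ℝ ({X 0, W} : Set R3) := by
  -- extract F with ρ F = ν P
  have hmem : ν P ∈ Algebra.adjoin ℝ (Set.range ![(X 0 : R3), X 0 * cpol]) := by
    apply aeval_mem
    intro i
    fin_cases i
    · exact Algebra.subset_adjoin ⟨0, rfl⟩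
    · exact Algebra.subset_adjoin ⟨1, rfl⟩
    · exact Subalgebra.zero_mem _
  rw [Algebra.adjoin_range_eq_range_aeval] at hmem
  obtain ⟨F, hF⟩ := hmem
  have hFδ : ρ F = δ P := by
    rw [show ρ F = ν P from hF]
    exact nu_eq_delta h
  -- construct preimage K in the adjoin
  set K : R3 := ∑ m ∈ F.support,
    C (coeff m F) * (X 0 ^ (m 0 - m 1) * (C (2⁻¹:ℝ) * W) ^ (m 1)) with hK
  have h0 : (X 0 : R3) ∈ Algebra.adjoin ℝ ({X 0, W} : Set R3) :=
    Algebra.subset_adjoin (Set.mem_insert _ _)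
  have hw : W ∈ Algebra.adjoin ℝ ({X 0, W} : Set R3) :=
    Algebra.subset_adjoin (Set.mem_insert_iff.mpr (Or.inr rfl))
  have hcw : C (2⁻¹:ℝ) * W ∈ Algebra.adjoin ℝ ({X 0, W} : Set R3) := by
    rw [← smul_eq_C_mul]
    exact Subalgebra.smul_mem _ hw _
  have hKmem : K ∈ Algebra.adjoin ℝ ({X 0, W} : Set R3) := by
    apply Subalgebra.sum_mem
    intro m _
    rw [← smul_eq_C_mul]
    exact Subalgebra.smul_mem _ (mul_mem (pow_mem h0 _) (pow_mem hcw _)) _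
  -- δ K = ρ F
  have hC2 : (C (2⁻¹:ℝ) : R3) * C 2 = 1 := by rw [← C_mul]; norm_num
  have hδCW : δ (C (2⁻¹:ℝ) * W) = X 0 ^ 2 * cpol := by
    simp only [map_mul, map_sub, map_pow, δ, W, cpol, aeval_X, aeval_C, Matrix.cons_val_zero,
      Matrix.cons_val_one, Matrix.head_cons, Matrix.cons_val_two, Matrix.tail_cons,
      algebraMap_eq]
    linear_combination (X 0 ^ 2 * X 1 : R3) * hC2
  have hδX0 : δ (X 0) = X 0 := by simp [δ]
  have hδK : δ K = ρ F := by
    rw [hK, map_sum]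
    have hstep : ∀ m ∈ F.support,
        δ (C (coeff m F) * (X 0 ^ (m 0 - m 1) * (C (2⁻¹:ℝ) * W) ^ (m 1)))
          = C (coeff m F) * (X 0 ^ (m 0 + m 1) * cpol ^ (m 1)) := by
      intro m hm
      have hb : m 1 ≤ m 0 := F_bound hFδ hm
      rw [map_mul, map_mul, map_pow, map_pow, hδCW, hδX0]
      have : δ (C (coeff m F)) = C (coeff m F) := by
        rw [show (C (coeff m F) : R3) = algebraMap ℝ R3 (coeff m F) from rfl]
        exact AlgHom.commutes _ _
      rw [this, show (m 0 + m 1) = (m 0 - m 1) + 2 * m 1 from by omega, pow_add, pow_mul]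
      ring
    rw [Finset.sum_congr rfl hstep]
    conv_rhs => rw [as_sum F]
    rw [map_sum]
    simp_rw [rho_monomial]
  have hPK : P = K := delta_inj (by rw [← hFδ, hδK])
  rw [hPK]
  exact hKmem

lemma easy {P : R3} (h : P ∈ Algebra.adjoin ℝ ({X 0, W} : Set R3)) : Dop P = 0 := by
  induction h using Algebra.adjoin_induction with
  | mem x hx =>
      rcases Set.mem_insert_iff.mp hx with rfl | hx
      · exact Dop_X0
      · rw [Set.mem_singleton_iff.mp hx]
        exact Dop_W
  | algebraMap r => exact Dop_C r
  | add x y _ _ hx hy => rw [Dop_add, hx, hy, add_zero]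
  | mul x y _ _ hx hy => rw [Dop_mul, hx, hy, mul_zero, mul_zero, add_zero]

end Stmt15

open Stmt15 in
/-- Let `D = V∂_U + Z∂_V` be the derivation on `ℝ[Z,U,V]` with `D(U)=V`, `D(V)=Z`,
`D(Z)=0` (coordinates: variable `0 = Z`, `1 = U`, `2 = V`).  Then
`ker D = ℝ[Z, 2ZU − V²]`, the subalgebra generated by `Z` and `2ZU − V²`. -/
theorem stmt_15 :
    ∀ P : MvPolynomial (Fin 3) ℝ,
      X 2 * pderiv (1 : Fin 3) P + X 0 * pderiv (2 : Fin 3) P = 0 ↔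
        P ∈ Algebra.adjoin ℝ
          ({X 0, C 2 * (X 0 * X 1) - (X 2) ^ 2} : Set (MvPolynomial (Fin 3) ℝ)) := by
  intro P
  constructor
  · intro h
    exact hard h
  · intro h
    exact easy h
end
end
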